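/- arXiv:2603.14134 — 9 statements merged into one kernel-verified Lean document; each statement's English description precedes it below -/
import Mathlib

section
/- Let ψ : ℝ≥0 → ℝ≥0 be a bounded measurable function with ‖ψ‖_∞ = 1, and for p > 0 define I_p(ψ) = (p ∫_0^∞ ψ(r) r^{p-1} dr)^{1/p}. Then for 0 < p < q with I_p(ψ) and I_q(ψ) finite, one has I_p(ψ) ≤ I_q(ψ). -/
open MeasureTheory Set

/-- monotonicity of `p ↦ I_p(ψ)` for `p > 0`. -/
theorem Ip_mono (ψ : ℝ → ℝ) (hmeas : Measurable ψ) (hnonneg : ∀ r, 0 ≤ ψ r)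
    (hbdd : ∀ᵐ r ∂(volume.restrict (Ici (0:ℝ))), ψ r ≤ 1)
    (hsup : essSup ψ (volume.restrict (Ici (0:ℝ))) = 1)
    (p q : ℝ) (hp : 0 < p) (hpq : p < q)
    (hIp : IntegrableOn (fun r => ψ r * r ^ (p - 1)) (Ioi 0))
    (hIq : IntegrableOn (fun r => ψ r * r ^ (q - 1)) (Ioi 0)) :
    (p * ∫ r in Ioi (0:ℝ), ψ r * r ^ (p - 1)) ^ (1 / p)
      ≤ (q * ∫ r in Ioi (0:ℝ), ψ r * r ^ (q - 1)) ^ (1 / q) := by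
  have hq : (0:ℝ) < q := hp.trans hpq
  set A := ∫ r in Ioi (0:ℝ), ψ r * r ^ (p - 1) with hA
  set B := ∫ r in Ioi (0:ℝ), ψ r * r ^ (q - 1) with hB
  have hAnn : 0 ≤ A :=
    setIntegral_nonneg measurableSet_Ioi fun r hr =>
      mul_nonneg (hnonneg r) (Real.rpow_nonneg (le_of_lt hr) _)
  have hBnn : 0 ≤ B :=
    setIntegral_nonneg measurableSet_Ioi fun r hr =>
      mul_nonneg (hnonneg r) (Real.rpow_nonneg (le_of_lt hr) _)
  -- B is positive, else ψ = 0 a.e. on (0,∞), contradicting essSup = 1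
  have hBpos : 0 < B := by
    rcases hBnn.lt_or_eq with h | h
    · exact h
    exfalso
    have hnn : 0 ≤ᵐ[volume.restrict (Ioi (0:ℝ))] fun r => ψ r * r ^ (q - 1) := by
      filter_upwards [ae_restrict_mem measurableSet_Ioi] with r hr
      exact mul_nonneg (hnonneg r) (Real.rpow_nonneg (le_of_lt hr) _)
    have h0 : (fun r => ψ r * r ^ (q - 1)) =ᵐ[volume.restrict (Ioi (0:ℝ))] 0 :=
      (integral_eq_zero_iff_of_nonneg_ae hnn hIq).mp h.symm
    have hψ0 : ψ =ᵐ[volume.restrict (Ioi (0:ℝ))] 0 := by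
      filter_upwards [h0, ae_restrict_mem measurableSet_Ioi] with r h1 h2
      have hpow : (0:ℝ) < r ^ (q - 1) := Real.rpow_pos_of_pos h2 _
      simp only [Pi.zero_apply] at h1 ⊢
      rcases mul_eq_zero.mp h1 with h | h
      · exact h
      · exact absurd h (ne_of_gt hpow)
    rw [restrict_Ioi_eq_restrict_Ici] at hψ0
    have h00 : essSup ψ (volume.restrict (Ici (0:ℝ))) = 0 := by
      rw [essSup_congr_ae hψ0]
      refine essSup_const 0 ?_
      intro hc
      have := congrArg (fun μ : Measure ℝ => μ univ) hc
      simp [Measure.restrict_apply_univ] at this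
    rw [hsup] at h00
    norm_num at h00
  set R := (q * B) ^ (1 / q) with hRdef
  have hqB : (0:ℝ) < q * B := mul_pos hq hBpos
  have hR : 0 < R := Real.rpow_pos_of_pos hqB _
  have hRq : R ^ q = q * B := by
    rw [hRdef, ← Real.rpow_mul hqB.le, one_div_mul_cancel hq.ne', Real.rpow_one]
  -- integrability of all the pieces
  have hIp1 : IntegrableOn (fun r => ψ r * r ^ (p - 1)) (Ioc 0 R) :=
    hIp.mono_set Ioc_subset_Ioi_self
  have hIp2 : IntegrableOn (fun r => ψ r * r ^ (p - 1)) (Ioi R) :=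
    hIp.mono_set (Ioi_subset_Ioi hR.le)
  have hIq1 : IntegrableOn (fun r => ψ r * r ^ (q - 1)) (Ioc 0 R) :=
    hIq.mono_set Ioc_subset_Ioi_self
  have hIq2 : IntegrableOn (fun r => ψ r * r ^ (q - 1)) (Ioi R) :=
    hIq.mono_set (Ioi_subset_Ioi hR.le)
  have hLint : IntegrableOn (fun r : ℝ => r ^ (p - 1)) (Ioc 0 R) :=
    (intervalIntegrable_iff_integrableOn_Ioc_of_le hR.le).mp
      (intervalIntegral.intervalIntegrable_rpow' (by linarith))
  have hMint : IntegrableOn (fun r : ℝ => r ^ (q - 1)) (Ioc 0 R) :=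
    (intervalIntegrable_iff_integrableOn_Ioc_of_le hR.le).mp
      (intervalIntegral.intervalIntegrable_rpow' (by linarith))
  -- splitting the integrals
  have hIoi : Ioc (0:ℝ) R ∪ Ioi R = Ioi 0 := Ioc_union_Ioi_eq_Ioi hR.le
  have hdisj : Disjoint (Ioc (0:ℝ) R) (Ioi R) := Ioc_disjoint_Ioi le_rfl
  have hsplitA : A = (∫ r in Ioc (0:ℝ) R, ψ r * r ^ (p - 1))
      + ∫ r in Ioi R, ψ r * r ^ (p - 1) := by
    rw [hA, ← hIoi, setIntegral_union hdisj measurableSet_Ioi hIp1 hIp2]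
  have hsplitB : B = (∫ r in Ioc (0:ℝ) R, ψ r * r ^ (q - 1))
      + ∫ r in Ioi R, ψ r * r ^ (q - 1) := by
    rw [hB, ← hIoi, setIntegral_union hdisj measurableSet_Ioi hIq1 hIq2]
  -- explicit values of the power integrals
  have hL : ∫ r in Ioc (0:ℝ) R, r ^ (p - 1) = R ^ p / p := by
    have h := integral_rpow (a := 0) (b := R) (Or.inl (by linarith : (-1:ℝ) < p - 1))
    rw [intervalIntegral.integral_of_le hR.le, show p - 1 + 1 = p by ring,
      Real.zero_rpow hp.ne'] at h
    rw [h]; ring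
  have hM : ∫ r in Ioc (0:ℝ) R, r ^ (q - 1) = R ^ q / q := by
    have h := integral_rpow (a := 0) (b := R) (Or.inl (by linarith : (-1:ℝ) < q - 1))
    rw [intervalIntegral.integral_of_le hR.le, show q - 1 + 1 = q by ring,
      Real.zero_rpow hq.ne'] at h
    rw [h]; ring
  -- key inequality on (0, R]
  have hkey1 : (∫ r in Ioc (0:ℝ) R, ψ r * r ^ (p - 1))
      ≤ ∫ r in Ioc (0:ℝ) R,
          (r ^ (p - 1) - R ^ (p - q) * (r ^ (q - 1) - ψ r * r ^ (q - 1))) := by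
    refine setIntegral_mono_ae_restrict hIp1
      (hLint.sub ((hMint.sub hIq1).const_mul _)) ?_
    have hbdd' : ∀ᵐ r ∂(volume.restrict (Ioc (0:ℝ) R)), ψ r ≤ 1 :=
      ae_restrict_of_ae_restrict_of_subset (fun x hx => le_of_lt hx.1) hbdd
    filter_upwards [hbdd', ae_restrict_mem measurableSet_Ioc] with r h1 h2
    have hr0 : (0:ℝ) < r := h2.1
    have hrc : R ^ (p - q) ≤ r ^ (p - q) :=
      Real.rpow_le_rpow_of_nonpos hr0 h2.2 (by linarith)
    have hsplit : r ^ (p - 1) = r ^ (p - q) * r ^ (q - 1) := by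
      rw [← Real.rpow_add hr0]; ring_nf
    rw [hsplit]
    nlinarith [mul_nonneg (mul_nonneg (sub_nonneg.mpr h1)
        (Real.rpow_nonneg hr0.le (q - 1))) (sub_nonneg.mpr hrc)]
  -- key inequality on (R, ∞)
  have hkey2 : (∫ r in Ioi R, ψ r * r ^ (p - 1))
      ≤ R ^ (p - q) * ∫ r in Ioi R, ψ r * r ^ (q - 1) := by
    rw [← integral_const_mul]
    refine setIntegral_mono_on hIp2 (hIq2.const_mul _) measurableSet_Ioi ?_
    intro r hr
    have hr0 : (0:ℝ) < r := hR.trans hr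
    have hrc : r ^ (p - q) ≤ R ^ (p - q) :=
      Real.rpow_le_rpow_of_nonpos hR (le_of_lt hr) (by linarith)
    have hsplit : r ^ (p - 1) = r ^ (p - q) * r ^ (q - 1) := by
      rw [← Real.rpow_add hr0]; ring_nf
    rw [hsplit]
    calc ψ r * (r ^ (p - q) * r ^ (q - 1)) = r ^ (p - q) * (ψ r * r ^ (q - 1)) := by ring
      _ ≤ R ^ (p - q) * (ψ r * r ^ (q - 1)) :=
        mul_le_mul_of_nonneg_right hrc
          (mul_nonneg (hnonneg r) (Real.rpow_nonneg hr0.le _))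
  -- evaluate the RHS of hkey1
  have hgval : (∫ r in Ioc (0:ℝ) R,
        (r ^ (p - 1) - R ^ (p - q) * (r ^ (q - 1) - ψ r * r ^ (q - 1))))
      = R ^ p / p - R ^ (p - q) * (R ^ q / q - ∫ r in Ioc (0:ℝ) R, ψ r * r ^ (q - 1)) := by
    have hint2 : IntegrableOn
        (fun r => R ^ (p - q) * (r ^ (q - 1) - ψ r * r ^ (q - 1))) (Ioc 0 R) :=
      (hMint.sub hIq1).const_mul _
    rw [integral_sub hLint hint2, integral_const_mul, integral_sub hMint hIq1, hL, hM]
  -- conclude p * A ≤ R ^ p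
  have hRqq : R ^ q / q = B := by rw [hRq]; field_simp
  have hpA : p * A ≤ R ^ p := by
    have h1 := hkey1.trans_eq hgval
    have h2 := hkey2
    rw [hRqq, show B - (∫ r in Ioc (0:ℝ) R, ψ r * r ^ (q - 1))
        = ∫ r in Ioi R, ψ r * r ^ (q - 1) from by linarith [hsplitB]] at h1
    have : A ≤ R ^ p / p := by
      rw [hsplitA]
      linarith [h1, h2]
    calc p * A ≤ p * (R ^ p / p) := by nlinarith
      _ = R ^ p := by field_simp
  calc (p * A) ^ (1 / p) ≤ (R ^ p) ^ (1 / p) :=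
        Real.rpow_le_rpow (mul_nonneg hp.le hAnn) hpA (by positivity)
    _ = R := by
        rw [← Real.rpow_mul hR.le, mul_one_div_cancel hp.ne', Real.rpow_one]
end

section
/- Let ψ : ℝ≥0 → ℝ≥0 be measurable with ‖ψ‖_∞ = 1 and suppose there is a > 0 with I_p(ψ) = a and I_q(ψ) = a for some 0 < p < q, where I_p(ψ) = (p ∫_0^∞ ψ(r) r^{p-1} dr)^{1/p}. Then ψ = χ_{[0,a]} almost everywhere. -/
open MeasureTheory Set Filter

/-- equality case in the monotonicity of `p ↦ I_p(ψ)`: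
if `I_p(ψ) = I_q(ψ) = a` for some `0 < p < q`, then `ψ = χ_{[0,a]}` a.e. on `[0,∞)`. -/
theorem Ip_eq_case (ψ : ℝ → ℝ) (hmeas : Measurable ψ) (hnonneg : ∀ r, 0 ≤ ψ r)
    (hsup : essSup ψ (volume.restrict (Ici (0:ℝ))) = 1)
    (p q : ℝ) (hp : 0 < p) (hpq : p < q)
    (hIp : IntegrableOn (fun r => ψ r * r ^ (p - 1)) (Ioi 0))
    (hIq : IntegrableOn (fun r => ψ r * r ^ (q - 1)) (Ioi 0))
    (a : ℝ) (ha : 0 < a)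
    (hpa : (p * ∫ r in Ioi (0:ℝ), ψ r * r ^ (p - 1)) ^ (1 / p) = a)
    (hqa : (q * ∫ r in Ioi (0:ℝ), ψ r * r ^ (q - 1)) ^ (1 / q) = a) :
    ∀ᵐ r ∂(volume.restrict (Ici (0:ℝ))), ψ r = Set.indicator (Icc (0:ℝ) a) 1 r := by
  have hq : 0 < q := hp.trans hpq
  -- ψ ≤ 1 a.e. on [0,∞)
  have hbd : IsBoundedUnder (· ≤ ·) (ae (volume.restrict (Ici (0:ℝ)))) ψ := by
    by_contra h
    rw [essSup, limsup_eq] at hsup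
    have he : {b : ℝ | ∀ᶠ n in ae (volume.restrict (Ici (0:ℝ))), ψ n ≤ b} = ∅ := by
      ext b; simp only [mem_setOf_eq, mem_empty_iff_false, iff_false]
      intro hb; exact h ⟨b, hb⟩
    rw [he, Real.sInf_empty] at hsup; norm_num at hsup
  have hle1 : ∀ᵐ r ∂(volume.restrict (Ici (0:ℝ))), ψ r ≤ 1 := by
    have := ae_le_essSup (f := ψ) (μ := volume.restrict (Ici (0:ℝ))) hbd
    rwa [hsup] at this
  have hle1' : ∀ᵐ r ∂(volume.restrict (Ioi (0:ℝ))), ψ r ≤ 1 :=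
    ae_restrict_of_ae_restrict_of_subset Ioi_subset_Ici_self hle1
  -- values of the two moment integrals
  have hval : ∀ s : ℝ, 0 < s → (s * ∫ r in Ioi (0:ℝ), ψ r * r ^ (s - 1)) ^ (1 / s) = a →
      (∫ r in Ioi (0:ℝ), ψ r * r ^ (s - 1)) = a ^ s / s := by
    intro s hs hsa
    have h0 : 0 ≤ ∫ r in Ioi (0:ℝ), ψ r * r ^ (s - 1) :=
      setIntegral_nonneg measurableSet_Ioi fun x hx =>
        mul_nonneg (hnonneg x) (Real.rpow_nonneg (le_of_lt hx) _)
    have h1 : 0 ≤ s * ∫ r in Ioi (0:ℝ), ψ r * r ^ (s - 1) := mul_nonneg hs.le h0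
    have h2 : s * ∫ r in Ioi (0:ℝ), ψ r * r ^ (s - 1) = a ^ s := by
      rw [one_div] at hsa
      calc s * ∫ r in Ioi (0:ℝ), ψ r * r ^ (s - 1)
          = ((s * ∫ r in Ioi (0:ℝ), ψ r * r ^ (s - 1)) ^ s⁻¹) ^ s :=
            (Real.rpow_inv_rpow h1 hs.ne').symm
        _ = a ^ s := by rw [hsa]
    field_simp at h2 ⊢
    linarith
  have hvp := hval p hp hpa
  have hvq := hval q hq hqa
  -- the indicator function pieces
  have indeq : ∀ s : ℝ, (fun r : ℝ => Set.indicator (Icc (0:ℝ) a) 1 r * r ^ (s - 1))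
      = Set.indicator (Icc (0:ℝ) a) (fun r => r ^ (s - 1)) := by
    intro s; funext r
    by_cases h : r ∈ Icc (0:ℝ) a <;> simp [Set.indicator_of_mem, Set.indicator_of_notMem, h]
  have hinter : Icc (0:ℝ) a ∩ Ioi 0 = Ioc 0 a := by
    ext x
    simp only [mem_inter_iff, mem_Ioi, mem_Icc, mem_Ioc]
    constructor
    · rintro ⟨⟨_, h3⟩, h1⟩; exact ⟨h1, h3⟩
    · rintro ⟨h1, h2⟩; exact ⟨⟨h1.le, h2⟩, h1⟩
  have hJint : ∀ s : ℝ, 0 < s →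
      IntegrableOn (fun r : ℝ => Set.indicator (Icc (0:ℝ) a) 1 r * r ^ (s - 1)) (Ioi 0) := by
    intro s hs
    rw [indeq, IntegrableOn, integrable_indicator_iff measurableSet_Icc]
    have h1 : IntegrableOn (fun r : ℝ => r ^ (s - 1)) (Ioc 0 a) :=
      (intervalIntegral.intervalIntegrable_rpow' (a := 0) (b := a) (r := s - 1)
        (by linarith)).1
    rwa [IntegrableOn, Measure.restrict_restrict measurableSet_Icc, hinter]
  have hJval : ∀ s : ℝ, 0 < s →
      (∫ r in Ioi (0:ℝ), Set.indicator (Icc (0:ℝ) a) 1 r * r ^ (s - 1)) = a ^ s / s := by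
    intro s hs
    rw [indeq, setIntegral_indicator measurableSet_Icc]
    have h1 : Ioi (0:ℝ) ∩ Icc 0 a = Ioc 0 a := by rw [inter_comm, hinter]
    rw [h1, ← intervalIntegral.integral_of_le ha.le,
      integral_rpow (Or.inl (by linarith)), sub_add_cancel, Real.zero_rpow hs.ne']
    ring
  -- g and w
  set c : ℝ := a ^ (q - p) with hc
  set g : ℝ → ℝ := fun r => ψ r - Set.indicator (Icc (0:ℝ) a) 1 r with hg
  set w : ℝ → ℝ := fun r => r ^ (q - 1) - c * r ^ (p - 1) with hw
  have hgw_eq : (fun r : ℝ => g r * w r) = fun r =>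
      (ψ r * r ^ (q - 1) - c * (ψ r * r ^ (p - 1)))
      - (Set.indicator (Icc (0:ℝ) a) 1 r * r ^ (q - 1)
        - c * (Set.indicator (Icc (0:ℝ) a) 1 r * r ^ (p - 1))) := by
    funext r; simp only [hg, hw]; ring
  have hint : IntegrableOn (fun r : ℝ => g r * w r) (Ioi 0) := by
    rw [hgw_eq]
    exact (hIq.sub (hIp.const_mul c)).sub ((hJint q hq).sub ((hJint p hp).const_mul c))
  have hintval : (∫ r in Ioi (0:ℝ), g r * w r) = 0 := by
    rw [hgw_eq]
    have e3 := integral_sub (μ := volume.restrict (Ioi (0:ℝ)))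
      (hIq.sub (hIp.const_mul c)) ((hJint q hq).sub ((hJint p hp).const_mul c))
    simp only [Pi.sub_apply] at e3
    rw [e3, integral_sub hIq (hIp.const_mul c),
      integral_sub (hJint q hq) ((hJint p hp).const_mul c),
      integral_const_mul, integral_const_mul, hvp, hvq, hJval p hp, hJval q hq]
    ring
  -- pointwise sign of w
  have hwneg : ∀ r : ℝ, 0 < r → r < a → w r < 0 := by
    intro r hr hra
    have h2 : r ^ (q - 1) = r ^ (p - 1) * r ^ (q - p) := by
      rw [← Real.rpow_add hr]; ring_nf
    have h3 : r ^ (q - p) < a ^ (q - p) := Real.rpow_lt_rpow hr.le hra (by linarith)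
    have h4 : 0 < r ^ (p - 1) := Real.rpow_pos_of_pos hr _
    simp only [hw, hc]
    rw [h2]
    nlinarith
  have hwpos : ∀ r : ℝ, a < r → 0 < w r := by
    intro r hra
    have hr : 0 < r := ha.trans hra
    have h2 : r ^ (q - 1) = r ^ (p - 1) * r ^ (q - p) := by
      rw [← Real.rpow_add hr]; ring_nf
    have h3 : a ^ (q - p) < r ^ (q - p) := Real.rpow_lt_rpow ha.le hra (by linarith)
    have h4 : 0 < r ^ (p - 1) := Real.rpow_pos_of_pos hr _
    simp only [hw, hc]
    rw [h2]
    nlinarith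
  -- g w ≥ 0 a.e.
  have hpos : ∀ᵐ r ∂(volume.restrict (Ioi (0:ℝ))), 0 ≤ g r * w r := by
    filter_upwards [hle1', ae_restrict_mem measurableSet_Ioi] with r h1 hr
    rcases lt_or_ge r a with hra | hra
    · have hmem : r ∈ Icc (0:ℝ) a := ⟨le_of_lt hr, hra.le⟩
      have hgle : g r ≤ 0 := by
        simp only [hg, Set.indicator_of_mem hmem, Pi.one_apply]; linarith
      nlinarith [hgle, (hwneg r hr hra).le]
    · rcases eq_or_lt_of_le hra with hra' | hra'
      · have : w r = 0 := by
          simp only [hw, hc, ← hra']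
          rw [show q - 1 = (p - 1) + (q - p) by ring, Real.rpow_add ha]
          ring
        simp [this]
      · have hmem : r ∉ Icc (0:ℝ) a := fun h => absurd h.2 (not_le.2 hra')
        have hgge : 0 ≤ g r := by
          simp only [hg, Set.indicator_of_notMem hmem]
          simpa using hnonneg r
        exact mul_nonneg hgge (hwpos r hra').le
  -- hence g w = 0 a.e.
  have hzero : (fun r : ℝ => g r * w r) =ᵐ[volume.restrict (Ioi (0:ℝ))] 0 :=
    (integral_eq_zero_iff_of_nonneg_ae hpos hint).1 hintval
  have hne : ∀ᵐ r ∂(volume.restrict (Ioi (0:ℝ))), r ≠ a := by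
    refine ae_restrict_of_ae ?_
    rw [ae_iff]
    have : {x : ℝ | ¬ x ≠ a} = {a} := by ext x; simp
    rw [this]; exact measure_singleton a
  have hfinal : ∀ᵐ r ∂(volume.restrict (Ioi (0:ℝ))),
      ψ r = Set.indicator (Icc (0:ℝ) a) 1 r := by
    filter_upwards [hzero, hne, ae_restrict_mem measurableSet_Ioi] with r hz hna hr
    have hz' : g r * w r = 0 := hz
    have hwne : w r ≠ 0 := by
      rcases lt_or_gt_of_ne hna with h | h
      · exact (hwneg r hr h).ne
      · exact (hwpos r h).ne'
    have : g r = 0 := by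
      rcases mul_eq_zero.1 hz' with h | h
      · exact h
      · exact absurd h hwne
    have := sub_eq_zero.1 this
    simpa using this
  rwa [← Measure.restrict_congr_set Ioi_ae_eq_Ici]
end

section
/- Let ψ : ℝ≥0 → ℝ≥0 be a bounded measurable function whose essential support equals [0,R] for some R > 0. Then lim_{p→∞} (p/‖ψ‖_∞ ∫_0^∞ ψ(r) r^{p-1} dr)^{1/p} = R. -/
open MeasureTheory Set

/-- The essential support of `ψ : ℝ → ℝ` inside `[0,∞)`: the set of points `t ≥ 0` having no
neighborhood on which `ψ` vanishes almost everywhere. -/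
def essSupport (ψ : ℝ → ℝ) : Set ℝ :=
  {t : ℝ | 0 ≤ t ∧ ∀ r > 0, 0 < volume {s ∈ Ioo (t - r) (t + r) ∩ Ici 0 | ψ s ≠ 0}}

/-- if the essential support of a bounded measurable `ψ ≥ 0` equals `[0,R]`,
then `I_p(ψ) = (p/‖ψ‖_∞ ∫_0^∞ ψ(r) r^{p-1} dr)^{1/p} → R` as `p → ∞`. -/
theorem Ip_tendsto_of_essSupport_Icc (ψ : ℝ → ℝ) (hmeas : Measurable ψ)
    (hnonneg : ∀ r, 0 ≤ ψ r) (M : ℝ) (hM : 0 < M)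
    (hMsup : essSup ψ (volume.restrict (Ici (0:ℝ))) = M)
    (hbdd : ∀ᵐ r ∂(volume.restrict (Ici (0:ℝ))), ψ r ≤ M)
    (R : ℝ) (hR : 0 < R) (hsupp : essSupport ψ = Icc 0 R) :
    Filter.Tendsto (fun p : ℝ => ((p / M) * ∫ r in Ioi (0:ℝ), ψ r * r ^ (p - 1)) ^ (1 / p))
      Filter.atTop (nhds R) := by
  -- Step 1 : ψ vanishes a.e. on (R, ∞)
  have hzero : volume {x | R < x ∧ ψ x ≠ 0} = 0 := by
    apply measure_null_of_locally_null
    intro x hx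
    have hxR : R < x := hx.1
    have hx0 : (0:ℝ) ≤ x := (hR.trans hxR).le
    have hnot : x ∉ essSupport ψ := by
      rw [hsupp]; exact fun h => absurd h.2 (not_le.mpr hxR)
    simp only [essSupport, mem_setOf_eq, not_and] at hnot
    push_neg at hnot
    obtain ⟨r, hr, hnull⟩ := hnot hx0
    rw [le_zero_iff] at hnull
    refine ⟨Ioo (x - r) (x + r) ∩ {x | R < x ∧ ψ x ≠ 0}, ?_, ?_⟩
    · exact Filter.inter_mem
        (mem_nhdsWithin_of_mem_nhds (Ioo_mem_nhds (by linarith) (by linarith)))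
        self_mem_nhdsWithin
    · refine measure_mono_null ?_ hnull
      rintro y ⟨hy1, hy2, hy3⟩
      exact ⟨⟨hy1, (hR.trans hy2).le⟩, hy3⟩
  -- Step 2 : basic integral facts for each p ≥ 1
  have key : ∀ p : ℝ, 1 ≤ p →
      IntegrableOn (fun r : ℝ => ψ r * r ^ (p - 1)) (Ioi 0) ∧
      (∫ r in Ioi (0:ℝ), ψ r * r ^ (p - 1)) ≤ M * (R ^ p / p) := by
    intro p hp
    have hp0 : 0 < p := lt_of_lt_of_le one_pos hp
    have hp1 : 0 ≤ p - 1 := by linarith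
    have hm : Measurable fun r : ℝ => ψ r * r ^ (p - 1) :=
      hmeas.mul (measurable_id.pow_const _)
    have hbdd' : ∀ᵐ r ∂(volume.restrict (Ioc (0:ℝ) R)), ψ r ≤ M :=
      ae_mono (Measure.restrict_mono (fun x hx => hx.1.le) le_rfl) hbdd
    have hIoc : IntegrableOn (fun r : ℝ => ψ r * r ^ (p - 1)) (Ioc 0 R) := by
      apply Measure.integrableOn_of_bounded (M := M * R ^ (p - 1))
      · exact ((measure_Ioc_lt_top).ne)
      · exact hm.aestronglyMeasurable
      · rw [ae_restrict_iff' measurableSet_Ioc] at hbdd' ⊢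
        filter_upwards [hbdd'] with r h hr
        have h1 : r ^ (p - 1) ≤ R ^ (p - 1) :=
          Real.rpow_le_rpow hr.1.le hr.2 hp1
        have h2 : (0:ℝ) ≤ r ^ (p - 1) := Real.rpow_nonneg hr.1.le _
        rw [Real.norm_eq_abs, abs_of_nonneg (mul_nonneg (hnonneg r) h2)]
        exact mul_le_mul (h hr) h1 h2 (hM.le)
    have haeIoiR : (fun r : ℝ => ψ r * r ^ (p - 1)) =ᵐ[volume.restrict (Ioi R)] 0 := by
      rw [Filter.EventuallyEq, ae_restrict_iff' measurableSet_Ioi]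
      rw [ae_iff]
      refine measure_mono_null ?_ hzero
      intro x hx
      simp only [mem_setOf_eq, not_forall] at hx ⊢
      obtain ⟨hx1, hx2⟩ := hx
      refine ⟨hx1, fun h => hx2 ?_⟩
      simp [h]
    have hIoiR : IntegrableOn (fun r : ℝ => ψ r * r ^ (p - 1)) (Ioi R) :=
      (integrable_zero _ _ _).congr haeIoiR.symm
    have hunion : Ioi (0:ℝ) = Ioc 0 R ∪ Ioi R := (Ioc_union_Ioi_eq_Ioi hR.le).symm
    have hint : IntegrableOn (fun r : ℝ => ψ r * r ^ (p - 1)) (Ioi 0) := by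
      rw [hunion]; exact hIoc.union hIoiR
    refine ⟨hint, ?_⟩
    have heqI : (∫ r in Ioi (0:ℝ), ψ r * r ^ (p - 1))
        = ∫ r in Ioc (0:ℝ) R, ψ r * r ^ (p - 1) := by
      rw [hunion, setIntegral_union (Ioc_disjoint_Ioi le_rfl) measurableSet_Ioi hIoc hIoiR,
        integral_congr_ae haeIoiR]
      simp
    rw [heqI]
    have hRint : IntegrableOn (fun r : ℝ => M * r ^ (p - 1)) (Ioc 0 R) := by
      rw [← intervalIntegrable_iff_integrableOn_Ioc_of_le hR.le]
      exact (intervalIntegral.intervalIntegrable_rpow (Or.inl hp1)).const_mul M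
    have hle : (∫ r in Ioc (0:ℝ) R, ψ r * r ^ (p - 1))
        ≤ ∫ r in Ioc (0:ℝ) R, M * r ^ (p - 1) := by
      have hb2 : ∀ᵐ r ∂(volume.restrict (Ioc (0:ℝ) R)),
          ψ r * r ^ (p-1) ≤ M * r ^ (p-1) := by
        rw [ae_restrict_iff' measurableSet_Ioc] at hbdd' ⊢
        filter_upwards [hbdd'] with r h hr
        exact mul_le_mul_of_nonneg_right (h hr) (Real.rpow_nonneg hr.1.le _)
      exact integral_mono_ae hIoc hRint hb2
    refine hle.trans ?_
    rw [integral_const_mul]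
    have hval : (∫ r in Ioc (0:ℝ) R, r ^ (p - 1)) = R ^ p / p := by
      rw [← intervalIntegral.integral_of_le hR.le,
        integral_rpow (Or.inl (by linarith))]
      rw [Real.zero_rpow (by linarith : p - 1 + 1 ≠ 0)]
      ring_nf
    rw [hval]
  -- nonnegativity of the integral
  have hIpos : ∀ p : ℝ, 0 ≤ ∫ r in Ioi (0:ℝ), ψ r * r ^ (p - 1) := by
    intro p
    refine setIntegral_nonneg measurableSet_Ioi fun r hr => ?_
    exact mul_nonneg (hnonneg r) (Real.rpow_nonneg (le_of_lt hr) _)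
  rw [tendsto_order]
  constructor
  · -- lower bound
    intro b hbR
    rcases lt_or_ge b 0 with hb0 | hb0
    · filter_upwards [Filter.eventually_ge_atTop (1 : ℝ)] with p hp
      have hp0 : 0 < p := lt_of_lt_of_le one_pos hp
      have hbase : 0 ≤ (p / M) * ∫ r in Ioi (0:ℝ), ψ r * r ^ (p - 1) :=
        mul_nonneg (by positivity) (hIpos p)
      exact lt_of_lt_of_le hb0 (Real.rpow_nonneg hbase _)
    · -- construct the positive-measure set
      set x := (b + R) / 2 with hxdef
      set r0 := (R - b) / 4 with hr0def
      set a := (3 * b + R) / 4 with hadef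
      have hx : x ∈ essSupport ψ := by
        rw [hsupp]; constructor <;> [linarith; linarith]
      have hA : 0 < volume {s ∈ Ioo (x - r0) (x + r0) ∩ Ici 0 | ψ s ≠ 0} :=
        hx.2 r0 (by simp only [hr0def]; linarith)
      set A := {s ∈ Ioo (x - r0) (x + r0) ∩ Ici 0 | ψ s ≠ 0} with hAdef
      have hba : b < a := by rw [hadef]; linarith
      have ha : 0 < a := by rw [hadef]; linarith
      have hsub : A ⊆ Ioo a R := by
        rintro s ⟨⟨hs1, _⟩, _⟩
        have e1 : x - r0 = a := by rw [hxdef, hr0def, hadef]; ring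
        have e2 : x + r0 = (b + 3 * R) / 4 := by rw [hxdef, hr0def]; ring
        have h1 := hs1.1
        have h2 := hs1.2
        rw [e1] at h1
        rw [e2] at h2
        exact ⟨h1, by linarith⟩
      have hAmeas : MeasurableSet A := by
        apply MeasurableSet.inter (measurableSet_Ioo.inter measurableSet_Ici)
        exact (hmeas (measurableSet_singleton 0)).compl
      have hcover : A ⊆ ⋃ n : ℕ, A ∩ {s | 1 / (n + 1 : ℝ) ≤ ψ s} := by
        intro s hs
        have hpos : 0 < ψ s := lt_of_le_of_ne (hnonneg s) (Ne.symm hs.2)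
        obtain ⟨n, hn⟩ := exists_nat_one_div_lt hpos
        exact mem_iUnion.mpr ⟨n, hs, hn.le⟩
      have hex : ∃ n : ℕ, 0 < volume (A ∩ {s | 1 / (n + 1 : ℝ) ≤ ψ s}) := by
        by_contra h
        push_neg at h
        simp only [le_zero_iff] at h
        exact absurd (measure_mono_null hcover (measure_iUnion_null h)) hA.ne'
      obtain ⟨n, hn⟩ := hex
      set δ : ℝ := 1 / (n + 1 : ℝ) with hδdef
      have hδ : 0 < δ := by positivity
      set B := A ∩ {s | δ ≤ ψ s} with hBdef
      have hBmeas : MeasurableSet B := hAmeas.inter (hmeas measurableSet_Ici)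
      have hBsub : B ⊆ Ioo a R := (inter_subset_left).trans hsub
      have hBfin : volume B < ⊤ :=
        lt_of_le_of_lt (measure_mono hBsub) measure_Ioo_lt_top
      set c := (volume B).toReal with hcdef
      have hc : 0 < c := ENNReal.toReal_pos hn.ne' hBfin.ne
      -- the auxiliary lower sequence tends to a
      set K := δ * c / (M * a) with hKdef
      have hK : 0 < K := by positivity
      have hg : Filter.Tendsto (fun p : ℝ => ((p / M) * (δ * a ^ (p - 1) * c)) ^ (1 / p))
          Filter.atTop (nhds a) := by
        have heq : ∀ᶠ p : ℝ in Filter.atTop,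
            ((p / M) * (δ * a ^ (p - 1) * c)) ^ (1 / p)
            = p ^ (1/p) * K ^ (1/p) * a := by
          filter_upwards [Filter.eventually_ge_atTop (1 : ℝ)] with p hp
          have hp0 : 0 < p := lt_of_lt_of_le one_pos hp
          have h1 : (p / M) * (δ * a ^ (p - 1) * c) = (p * K) * a ^ p := by
            have h2 : a ^ p = a ^ (p - 1) * a := by
              rw [← Real.rpow_add_one ha.ne']; ring_nf
            rw [h2, hKdef]; field_simp
          rw [h1, Real.mul_rpow (mul_nonneg hp0.le hK.le) (Real.rpow_nonneg ha.le _),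
            Real.mul_rpow hp0.le hK.le, ← Real.rpow_mul ha.le, mul_one_div_cancel hp0.ne',
            Real.rpow_one]
        have h0 : Filter.Tendsto (fun p : ℝ => 1 / p) Filter.atTop (nhds 0) := by
          simpa [one_div] using tendsto_inv_atTop_zero
        have hB1 : Filter.Tendsto (fun p : ℝ => K ^ (1 / p)) Filter.atTop (nhds 1) := by
          simp only [Real.rpow_def_of_pos hK]
          have h3 : Filter.Tendsto (fun p : ℝ => Real.log K * (1 / p))
              Filter.atTop (nhds 0) := by
            simpa using h0.const_mul (Real.log K)
          simpa [Function.comp_def] using (Real.continuous_exp.tendsto 0).comp h3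
        have h4 := (tendsto_rpow_div.mul hB1).mul_const a
        rw [one_mul, one_mul] at h4
        exact h4.congr' (heq.mono fun p hp => hp.symm)
      have hev : ∀ᶠ p : ℝ in Filter.atTop,
          b < ((p / M) * (δ * a ^ (p - 1) * c)) ^ (1 / p) :=
        hg.eventually (eventually_gt_nhds hba)
      filter_upwards [hev, Filter.eventually_ge_atTop (1 : ℝ)] with p hgp hp
      have hp0 : 0 < p := lt_of_lt_of_le one_pos hp
      have hp1 : 0 ≤ p - 1 := by linarith
      obtain ⟨hint, -⟩ := key p hp
      -- lower bound on the integral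
      have hBIoi : B ⊆ Ioi (0:ℝ) := fun s hs => ha.trans (hBsub hs).1
      have hmono : (∫ r in B, ψ r * r ^ (p - 1))
          ≤ ∫ r in Ioi (0:ℝ), ψ r * r ^ (p - 1) := by
        apply setIntegral_mono_set hint
        · refine Filter.Eventually.mono (ae_restrict_mem measurableSet_Ioi) fun r hr => ?_
          simp only [Pi.zero_apply]
          exact mul_nonneg (hnonneg r) (Real.rpow_nonneg (le_of_lt hr) _)
        · exact HasSubset.Subset.eventuallyLE hBIoi
      have hlower : δ * a ^ (p - 1) * c ≤ ∫ r in B, ψ r * r ^ (p - 1) := by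
        refine (le_of_eq (by rw [smul_eq_mul, mul_comm]; rfl)).trans (setIntegral_ge_of_const_le hBmeas hBfin.ne (fun s hs => ?_)
          (hint.mono_set hBIoi))
        have hsa : a ≤ s := (hBsub hs).1.le
        have h5 : a ^ (p - 1) ≤ s ^ (p - 1) := Real.rpow_le_rpow ha.le hsa hp1
        exact mul_le_mul hs.2 h5 (Real.rpow_nonneg ha.le _) (hnonneg s)
      have hfull : (p / M) * (δ * a ^ (p - 1) * c)
          ≤ (p / M) * ∫ r in Ioi (0:ℝ), ψ r * r ^ (p - 1) :=
        mul_le_mul_of_nonneg_left (hlower.trans hmono) (by positivity)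
      calc b < ((p / M) * (δ * a ^ (p - 1) * c)) ^ (1 / p) := hgp
        _ ≤ ((p / M) * ∫ r in Ioi (0:ℝ), ψ r * r ^ (p - 1)) ^ (1 / p) :=
          Real.rpow_le_rpow (by positivity) hfull (by positivity)
  · -- upper bound
    intro b hbR
    filter_upwards [Filter.eventually_ge_atTop (1 : ℝ)] with p hp
    have hp0 : 0 < p := lt_of_lt_of_le one_pos hp
    obtain ⟨hint, hub⟩ := key p hp
    have hbase : (p / M) * (∫ r in Ioi (0:ℝ), ψ r * r ^ (p - 1)) ≤ R ^ p := by
      have h1 : (p / M) * (∫ r in Ioi (0:ℝ), ψ r * r ^ (p - 1))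
          ≤ (p / M) * (M * (R ^ p / p)) :=
        mul_le_mul_of_nonneg_left hub (by positivity)
      have h2 : (p / M) * (M * (R ^ p / p)) = R ^ p := by
        field_simp
      linarith
    have h3 : ((p / M) * ∫ r in Ioi (0:ℝ), ψ r * r ^ (p - 1)) ^ (1 / p)
        ≤ (R ^ p) ^ (1 / p) :=
      Real.rpow_le_rpow (mul_nonneg (by positivity) (hIpos p)) hbase (by positivity)
    have h4 : (R ^ p : ℝ) ^ (1 / p) = R := by
      rw [← Real.rpow_mul hR.le, mul_one_div_cancel hp0.ne', Real.rpow_one]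
    rw [h4] at h3
    exact lt_of_le_of_lt h3 hbR
end

section
/- Let ψ : ℝ≥0 → ℝ≥0 be measurable with essential support equal to all of [0,∞), and assume all moments ∫_0^∞ ψ(r) r^{p-1} dr are finite for p > 0. Then lim_{p→∞} (p/‖ψ‖_∞ ∫_0^∞ ψ(r) r^{p-1} dr)^{1/p} = ∞. -/
open MeasureTheory Set

/-- if the essential support of `ψ` is all of `[0,∞)` and all moments are finite,
then `I_p(ψ) = (p/‖ψ‖_∞ ∫_0^∞ ψ(r) r^{p-1} dr)^{1/p} → ∞` as `p → ∞`. -/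
theorem Ip_tendsto_atTop_of_essSupport_Ici (ψ : ℝ → ℝ) (hmeas : Measurable ψ)
    (hnonneg : ∀ r, 0 ≤ ψ r) (M : ℝ) (hM : 0 < M)
    (hMsup : essSup ψ (volume.restrict (Ici (0:ℝ))) = M)
    (hbdd : ∀ᵐ r ∂(volume.restrict (Ici (0:ℝ))), ψ r ≤ M)
    (hmom : ∀ p : ℝ, 0 < p → IntegrableOn (fun r => ψ r * r ^ (p - 1)) (Ioi 0))
    (hsupp : essSupport ψ = Ici 0) :
    Filter.Tendsto (fun p : ℝ => ((p / M) * ∫ r in Ioi (0:ℝ), ψ r * r ^ (p - 1)) ^ (1 / p))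
      Filter.atTop Filter.atTop := by
  rw [Filter.tendsto_atTop]
  intro K
  -- choose a point `t` of the essential support far to the right of `K`
  set K' : ℝ := max K 1 with hK'
  set t : ℝ := K' + 2 with ht
  set a : ℝ := K' + 1 with ha
  have hK1 : (1:ℝ) ≤ K' := le_max_right _ _
  have haK : K < a := lt_of_le_of_lt (le_max_left K 1) (by simp [ha]; constructor <;> linarith [le_max_left K 1, hK'])
  have ha1 : (1:ℝ) ≤ a := by simp [ha]; linarith
  have ha0 : (0:ℝ) < a := by linarith
  have htmem : t ∈ essSupport ψ := by
    rw [hsupp]; exact mem_Ici.2 (by linarith)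
  have hSvol := htmem.2 1 one_pos
  set S : Set ℝ := {s ∈ Ioo (t - 1) (t + 1) ∩ Ici 0 | ψ s ≠ 0} with hS
  have hSmeas : MeasurableSet S := by
    exact (((measurableSet_Ioo.inter measurableSet_Ici)).inter
      ((hmeas (measurableSet_singleton 0)).compl))
  have hSsub : S ⊆ Ioo a (t + 1) := by
    intro s hs
    have := hs.1.1
    constructor
    · have : t - 1 = a := by simp [ht, ha]; ring
      exact this ▸ hs.1.1.1
    · exact hs.1.1.2
  have hSpos : ∀ s ∈ S, a ≤ s := fun s hs => (hSsub hs).1.le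
  have hSIoi : S ⊆ Ioi 0 := fun s hs => lt_trans ha0 (hSsub hs).1
  -- ψ is integrable on Ioi 0
  have hψint : IntegrableOn ψ (Ioi 0) := by
    have h1 := hmom 1 one_pos
    refine h1.congr_fun (fun r hr => ?_) measurableSet_Ioi
    rw [sub_self]; beta_reduce; rw [Real.rpow_zero, mul_one]
  have hψS : IntegrableOn ψ S := hψint.mono_set hSIoi
  set c : ℝ := ∫ s in S, ψ s with hc
  have hcpos : 0 < c := by
    rw [hc, setIntegral_pos_iff_support_of_nonneg_ae (ae_of_all _ hnonneg) hψS]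
    refine lt_of_lt_of_le hSvol (measure_mono ?_)
    intro s hs
    exact ⟨hs.2, hs⟩
  -- key lower bound for p ≥ 1
  have key : ∀ p : ℝ, 1 ≤ p → c * a ^ (p - 1) ≤ ∫ r in Ioi (0:ℝ), ψ r * r ^ (p - 1) := by
    intro p hp
    have hp0 : 0 < p := lt_of_lt_of_le one_pos hp
    have hp1 : 0 ≤ p - 1 := by linarith
    have h1 : c * a ^ (p - 1) = ∫ s in S, ψ s * a ^ (p - 1) := by
      rw [integral_mul_const]
    have hintS : IntegrableOn (fun r => ψ r * r ^ (p - 1)) S :=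
      (hmom p hp0).mono_set hSIoi
    have h2 : ∫ s in S, ψ s * a ^ (p - 1) ≤ ∫ s in S, ψ s * s ^ (p - 1) := by
      refine setIntegral_mono_on (hψS.mul_const _) hintS hSmeas (fun s hs => ?_)
      exact mul_le_mul_of_nonneg_left
        (Real.rpow_le_rpow ha0.le (hSpos s hs) hp1) (hnonneg s)
    have h3 : ∫ s in S, ψ s * s ^ (p - 1) ≤ ∫ r in Ioi (0:ℝ), ψ r * r ^ (p - 1) := by
      refine setIntegral_mono_set (hmom p hp0) ?_ (HasSubset.Subset.eventuallyLE hSIoi)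
      filter_upwards [ae_restrict_mem measurableSet_Ioi] with r hr
      exact mul_nonneg (hnonneg r) (Real.rpow_nonneg (le_of_lt hr) _)
    linarith
  -- the comparison function tends to `a`
  have hcM : 0 < c / M := div_pos hcpos hM
  have htend : Filter.Tendsto (fun p : ℝ => ((p / M) * (c * a ^ (p - 1))) ^ (1 / p))
      Filter.atTop (nhds a) := by
    have h1 : Filter.Tendsto (fun p : ℝ => p ^ (1/p)) Filter.atTop (nhds 1) :=
      tendsto_rpow_div
    have hinv : Filter.Tendsto (fun p : ℝ => 1/p) Filter.atTop (nhds 0) := by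
      simpa [one_div] using tendsto_inv_atTop_zero
    have h2 : Filter.Tendsto (fun p : ℝ => (c/M) ^ (1/p)) Filter.atTop (nhds 1) := by
      have := (Filter.Tendsto.rpow (tendsto_const_nhds (x := c/M)) hinv
        (Or.inl (ne_of_gt hcM)))
      simpa using this
    have hexp : Filter.Tendsto (fun p : ℝ => (p - 1) / p) Filter.atTop (nhds 1) := by
      have : Filter.Tendsto (fun p : ℝ => 1 - 1/p) Filter.atTop (nhds 1) := by
        simpa using tendsto_const_nhds.sub hinv
      refine this.congr' ?_
      filter_upwards [Filter.eventually_gt_atTop 0] with p hp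
      field_simp
    have h3 : Filter.Tendsto (fun p : ℝ => a ^ ((p - 1) / p)) Filter.atTop (nhds a) := by
      have := (Filter.Tendsto.rpow (tendsto_const_nhds (x := a)) hexp
        (Or.inl (ne_of_gt ha0)))
      simpa using this
    have h4 : Filter.Tendsto
        (fun p : ℝ => p ^ (1/p) * (c/M) ^ (1/p) * a ^ ((p - 1) / p))
        Filter.atTop (nhds a) := by
      have := (h1.mul h2).mul h3
      simpa using this
    refine h4.congr' ?_
    filter_upwards [Filter.eventually_gt_atTop 0] with p hp
    have hp0 : (0:ℝ) ≤ p := hp.le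
    rw [show (p / M) * (c * a ^ (p - 1)) = (p * (c/M)) * a ^ (p - 1) by ring,
      Real.mul_rpow (by positivity) (Real.rpow_nonneg ha0.le _),
      Real.mul_rpow hp0 hcM.le, ← Real.rpow_mul ha0.le]
    congr 1
    field_simp
  -- conclude
  have hev : ∀ᶠ p : ℝ in Filter.atTop, K < ((p / M) * (c * a ^ (p - 1))) ^ (1 / p) :=
    htend.eventually (lt_mem_nhds haK)
  filter_upwards [hev, Filter.eventually_ge_atTop (1:ℝ)] with p hp1 hp2
  refine le_trans hp1.le ?_
  refine Real.rpow_le_rpow (by positivity) ?_ (by positivity)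
  exact mul_le_mul_of_nonneg_left (key p hp2) (by positivity)
end

section
/- Let ψ : ℝ≥0 → ℝ≥0 be measurable with ψ(0) = ‖ψ‖_∞ = 1, decaying to zero at infinity and α-Hölder continuous near 0. For -1 < p < 0 define I_p(ψ) = (p ∫_0^∞ r^{p-1}(ψ(r) - 1) dr)^{1/p}. Then p ↦ I_p(ψ) is monotone increasing on (-1, 0). -/
open MeasureTheory Set Real
open scoped ENNReal

namespace IpMonoAux

/-- 1-D lintegral change of variables. -/
lemma lintegral_image_eq {s : Set ℝ} {f f' : ℝ → ℝ} (hs : MeasurableSet s)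
    (hf' : ∀ x ∈ s, HasDerivWithinAt f (f' x) s x) (hf : InjOn f s) (g : ℝ → ℝ≥0∞) :
    ∫⁻ x in f '' s, g x = ∫⁻ x in s, ENNReal.ofReal |f' x| * g (f x) := by
  simpa only [ContinuousLinearMap.det_toSpanSingleton] using
    MeasureTheory.lintegral_image_eq_lintegral_abs_det_fderiv_mul volume hs
      (fun x hx => (hf' x hx).hasFDerivWithinAt) hf g

/-- Bathtub principle: integral of a decreasing function over a set of measure `c`
is at most its integral over `Ioo 0 c`. -/
lemma bathtub {A : Set ℝ} (hA : MeasurableSet A) (hA0 : A ⊆ Ioi 0) {c : ℝ} (hc : 0 ≤ c)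
    (hvol : volume A = ENNReal.ofReal c) {φ : ℝ → ℝ}
    (hφ : ∀ x y, 0 < x → x ≤ y → φ y ≤ φ x) :
    ∫⁻ s in A, ENNReal.ofReal (φ s) ≤ ∫⁻ s in Ioo 0 c, ENNReal.ofReal (φ s) := by
  rcases eq_or_lt_of_le hc with rfl | hcpos
  · have h0 : volume A = 0 := by simpa using hvol
    rw [setLIntegral_measure_zero _ _ h0]
    exact zero_le
  set I := Ioo (0:ℝ) c with hIdef
  have hI : MeasurableSet I := measurableSet_Ioo
  have hIvol : volume I = ENNReal.ofReal c := by
    simp [hIdef, Real.volume_Ioo]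
  have hfin : volume (A ∩ I) ≠ ⊤ := by
    refine ne_top_of_le_ne_top ?_ (measure_mono inter_subset_left)
    rw [hvol]; exact ENNReal.ofReal_ne_top
  -- measure of the two "difference" pieces agree
  have hmeq : volume (A \ I) = volume (I \ A) := by
    have h1 : volume (A \ I) + volume (A ∩ I) = volume A := measure_diff_add_inter A hI
    have h2 : volume (I \ A) + volume (I ∩ A) = volume I := measure_diff_add_inter I hA
    have h3 : volume (I ∩ A) = volume (A ∩ I) := by rw [inter_comm]
    have h4 : volume (A \ I) + volume (A ∩ I) = volume (I \ A) + volume (A ∩ I) := by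
      rw [h1, hvol, ← hIvol, ← h2, h3]
    exact WithTop.add_right_cancel hfin h4
  have hsplitA : ∫⁻ s in A, ENNReal.ofReal (φ s)
      = (∫⁻ s in A ∩ I, ENNReal.ofReal (φ s)) + ∫⁻ s in A \ I, ENNReal.ofReal (φ s) := by
    rw [← lintegral_union (hA.diff hI) (disjoint_sdiff_self_right.mono_left inter_subset_right),
      inter_union_diff]
  have hsplitI : ∫⁻ s in I, ENNReal.ofReal (φ s)
      = (∫⁻ s in I ∩ A, ENNReal.ofReal (φ s)) + ∫⁻ s in I \ A, ENNReal.ofReal (φ s) := by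
    rw [← lintegral_union (hI.diff hA) (disjoint_sdiff_self_right.mono_left inter_subset_right),
      inter_union_diff]
  have hup : ∫⁻ s in A \ I, ENNReal.ofReal (φ s) ≤ ENNReal.ofReal (φ c) * volume (A \ I) := by
    calc ∫⁻ s in A \ I, ENNReal.ofReal (φ s)
        ≤ ∫⁻ _ in A \ I, ENNReal.ofReal (φ c) := by
          refine setLIntegral_mono' (hA.diff hI) fun s hs => ?_
          have hs0 : 0 < s := hA0 hs.1
          have hcs : c ≤ s := by
            by_contra h
            exact hs.2 ⟨hs0, lt_of_not_ge h⟩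
          exact ENNReal.ofReal_le_ofReal (hφ c s hcpos hcs)
      _ = ENNReal.ofReal (φ c) * volume (A \ I) := by rw [setLIntegral_const]
  have hdown : ENNReal.ofReal (φ c) * volume (I \ A) ≤ ∫⁻ s in I \ A, ENNReal.ofReal (φ s) := by
    calc ENNReal.ofReal (φ c) * volume (I \ A)
        = ∫⁻ _ in I \ A, ENNReal.ofReal (φ c) := by rw [setLIntegral_const]
      _ ≤ ∫⁻ s in I \ A, ENNReal.ofReal (φ s) := by
          refine setLIntegral_mono' (hI.diff hA) fun s hs => ?_
          exact ENNReal.ofReal_le_ofReal (hφ s c hs.1.1 hs.1.2.le)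
  calc ∫⁻ s in A, ENNReal.ofReal (φ s)
      = (∫⁻ s in A ∩ I, ENNReal.ofReal (φ s)) + ∫⁻ s in A \ I, ENNReal.ofReal (φ s) := hsplitA
    _ ≤ (∫⁻ s in A ∩ I, ENNReal.ofReal (φ s)) + ENNReal.ofReal (φ c) * volume (A \ I) := by
        exact add_le_add le_rfl hup
    _ = (∫⁻ s in I ∩ A, ENNReal.ofReal (φ s)) + ENNReal.ofReal (φ c) * volume (I \ A) := by
        rw [inter_comm, hmeq]
    _ ≤ (∫⁻ s in I ∩ A, ENNReal.ofReal (φ s)) + ∫⁻ s in I \ A, ENNReal.ofReal (φ s) := by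
        exact add_le_add le_rfl hdown
    _ = ∫⁻ s in I, ENNReal.ofReal (φ s) := hsplitI.symm

/-- `∫_0^c β s^{β-1} ds = c^β`. -/
lemma lintegral_phi {β c : ℝ} (hβ0 : 0 < β) (hβ1 : β < 1) (hc : 0 ≤ c) :
    ∫⁻ s in Ioo 0 c, ENNReal.ofReal (β * s ^ (β - 1)) = ENNReal.ofReal (c ^ β) := by
  rcases eq_or_lt_of_le hc with rfl | hcpos
  · simp [Real.zero_rpow hβ0.ne']
  have hβ1' : (-1:ℝ) < β - 1 := by linarith
  have hint : IntegrableOn (fun s : ℝ => β * s ^ (β - 1)) (Ioo 0 c) := by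
    have := (intervalIntegral.intervalIntegrable_rpow' (a := 0) (b := c) hβ1')
    rw [intervalIntegrable_iff_integrableOn_Ioc_of_le hc] at this
    exact (this.mono_set Ioo_subset_Ioc_self).const_mul β
  have hnn : (0:ℝ → ℝ) ≤ᵐ[volume.restrict (Ioo 0 c)] fun s => β * s ^ (β - 1) := by
    refine (ae_restrict_iff' measurableSet_Ioo).2 (ae_of_all _ fun s hs => ?_)
    exact mul_nonneg hβ0.le (Real.rpow_nonneg hs.1.le _)
  rw [← ofReal_integral_eq_lintegral_ofReal hint hnn]
  congr 1
  rw [← MeasureTheory.integral_Ioc_eq_integral_Ioo,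
    ← intervalIntegral.integral_of_le hc, intervalIntegral.integral_const_mul,
    integral_rpow (Or.inl hβ1')]
  rw [sub_add_cancel, Real.zero_rpow hβ0.ne', sub_zero]
  field_simp

/-- Key inequality: `ν_q(E) ≤ ν_p(E)^{q/p}` for `p < q < 0`. -/
lemma key {p q : ℝ} (hp : p < 0) (hpq : p < q) (hq : q < 0) {E : Set ℝ}
    (hE : MeasurableSet E) (hE0 : E ⊆ Ioi 0) :
    (∫⁻ r in E, ENNReal.ofReal ((-q) * r ^ (q - 1)))
      ≤ (∫⁻ r in E, ENNReal.ofReal ((-p) * r ^ (p - 1))) ^ (q / p) := by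
  set β := q / p with hβ
  have hβ0 : 0 < β := by
    have := div_pos (neg_pos.2 hq) (neg_pos.2 hp)
    rwa [neg_div_neg_eq] at this
  have hβ1 : β < 1 := by
    have h1 : (q - p) / p < 0 := div_neg_of_pos_of_neg (by linarith) hp
    rw [sub_div, div_self hp.ne] at h1
    have : β - 1 < 0 := by rw [hβ]; linarith
    linarith
  have hpβ : p * β = q := by rw [hβ, mul_comm, div_mul_cancel₀ _ hp.ne]
  -- change of variables x ↦ x^p
  have hd : ∀ x ∈ E, HasDerivWithinAt (fun t : ℝ => t ^ p) (p * x ^ (p - 1)) E x := fun x hx =>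
    (Real.hasDerivAt_rpow_const (Or.inl (hE0 hx).ne')).hasDerivWithinAt
  have hanti : StrictAntiOn (fun x : ℝ => x ^ p) (Ioi 0) := fun x hx y _ hxy =>
    Real.rpow_lt_rpow_of_neg hx hxy hp
  have hinj : InjOn (fun x : ℝ => x ^ p) E := (hanti.injOn).mono hE0
  set A : Set ℝ := Ioi 0 ∩ (fun s : ℝ => s ^ (1 / p)) ⁻¹' E with hAdef
  have hAmeas : MeasurableSet A :=
    measurableSet_Ioi.inter ((measurable_id.pow_const (1 / p)) hE)
  have hA0 : A ⊆ Ioi 0 := inter_subset_left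
  have himg : (fun x : ℝ => x ^ p) '' E = A := by
    ext s
    constructor
    · rintro ⟨x, hxE, rfl⟩
      have hx : (0:ℝ) < x := hE0 hxE
      refine ⟨Real.rpow_pos_of_pos hx p, ?_⟩
      simp only [mem_preimage]
      rw [← Real.rpow_mul hx.le, mul_one_div_cancel hp.ne, Real.rpow_one]
      exact hxE
    · rintro ⟨hs, hsE⟩
      refine ⟨s ^ (1 / p), hsE, ?_⟩
      simp only
      rw [← Real.rpow_mul (le_of_lt hs), one_div_mul_cancel hp.ne, Real.rpow_one]
  have hcv : ∀ g : ℝ → ℝ≥0∞, ∫⁻ s in A, g s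
      = ∫⁻ x in E, ENNReal.ofReal ((-p) * x ^ (p - 1)) * g (x ^ p) := by
    intro g
    rw [← himg, lintegral_image_eq hE hd hinj g]
    refine setLIntegral_congr_fun hE (fun x hx => ?_)
    have hx0 : (0:ℝ) < x := hE0 hx
    rw [abs_mul, abs_of_neg hp, abs_of_nonneg (Real.rpow_nonneg hx0.le _)]
  have hvolA : volume A = ∫⁻ x in E, ENNReal.ofReal ((-p) * x ^ (p - 1)) := by
    have h := hcv (fun _ => 1)
    simpa using h
  set NP := ∫⁻ r in E, ENNReal.ofReal ((-p) * r ^ (p - 1)) with hNP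
  by_cases htop : NP = ⊤
  · rw [htop, ENNReal.top_rpow_of_pos hβ0]
    exact le_top
  have hvol' : volume A = ENNReal.ofReal NP.toReal := by
    rw [hvolA]; exact (ENNReal.ofReal_toReal htop).symm
  -- express the q-integral as an integral over A
  have hNQ : (∫⁻ r in E, ENNReal.ofReal ((-q) * r ^ (q - 1)))
      = ∫⁻ s in A, ENNReal.ofReal (β * s ^ (β - 1)) := by
    rw [hcv (fun s => ENNReal.ofReal (β * s ^ (β - 1)))]
    refine (setLIntegral_congr_fun hE (fun x hx => ?_)).symm
    have hx0 : (0:ℝ) < x := hE0 hx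
    rw [← ENNReal.ofReal_mul (mul_nonneg (by linarith) (Real.rpow_nonneg hx0.le _))]
    congr 1
    rw [← Real.rpow_mul hx0.le p (β - 1)]
    have hexp : x ^ (p - 1) * x ^ (p * (β - 1)) = x ^ (q - 1) := by
      rw [← Real.rpow_add hx0]
      congr 1
      have : p * (β - 1) = q - p := by rw [mul_sub, hpβ]; ring
      rw [this]; ring
    calc (-p) * x ^ (p - 1) * (β * x ^ (p * (β - 1)))
        = ((-p) * β) * (x ^ (p - 1) * x ^ (p * (β - 1))) := by ring
      _ = (-q) * x ^ (q - 1) := by rw [hexp, ← hpβ]; ring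
  have hφ : ∀ x y : ℝ, 0 < x → x ≤ y → β * y ^ (β - 1) ≤ β * x ^ (β - 1) := fun x y hx hxy =>
    mul_le_mul_of_nonneg_left (Real.rpow_le_rpow_of_nonpos hx hxy (by linarith)) hβ0.le
  calc (∫⁻ r in E, ENNReal.ofReal ((-q) * r ^ (q - 1)))
      = ∫⁻ s in A, ENNReal.ofReal (β * s ^ (β - 1)) := hNQ
    _ ≤ ∫⁻ s in Ioo 0 NP.toReal, ENNReal.ofReal (β * s ^ (β - 1)) :=
        bathtub hAmeas hA0 ENNReal.toReal_nonneg hvol' hφ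
    _ = ENNReal.ofReal (NP.toReal ^ β) := lintegral_phi hβ0 hβ1 ENNReal.toReal_nonneg
    _ = NP ^ β := by
        rw [ENNReal.toReal_rpow, ENNReal.ofReal_toReal]
        exact ENNReal.rpow_ne_top_of_nonneg hβ0.le htop


/-- The "undergraph" set used for the layer-cake representation. -/
def S (ψ : ℝ → ℝ) : Set (ℝ × ℝ) := {z | z.2 < 1 - ψ z.1}

lemma measurableSet_S {ψ : ℝ → ℝ} (hmeas : Measurable ψ) : MeasurableSet (S ψ) :=
  measurableSet_lt measurable_snd (measurable_const.sub (hmeas.comp measurable_fst))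

lemma measurable_w (θ : ℝ) : Measurable fun r : ℝ => ENNReal.ofReal ((-θ) * r ^ (θ - 1)) :=
  ENNReal.measurable_ofReal.comp ((measurable_id.pow_const _).const_mul _)

lemma measurable_unc {ψ : ℝ → ℝ} (hmeas : Measurable ψ) (θ : ℝ) :
    Measurable fun z : ℝ × ℝ =>
      ENNReal.ofReal ((-θ) * z.1 ^ (θ - 1)) * (S ψ).indicator 1 z :=
  ((measurable_w θ).comp measurable_fst).mul (measurable_one.indicator (measurableSet_S hmeas))

lemma inner_eq (ψ : ℝ → ℝ) (hmeas : Measurable ψ) (θ t : ℝ) :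
    ∫⁻ r in Ioi 0, ENNReal.ofReal ((-θ) * r ^ (θ - 1)) * (S ψ).indicator 1 (r, t)
      = ∫⁻ r in {r | t < 1 - ψ r} ∩ Ioi 0, ENNReal.ofReal ((-θ) * r ^ (θ - 1)) := by
  have hEt : MeasurableSet {r : ℝ | t < 1 - ψ r} :=
    measurableSet_lt measurable_const (measurable_const.sub hmeas)
  have heq : ∀ r : ℝ, ENNReal.ofReal ((-θ) * r ^ (θ - 1)) * (S ψ).indicator 1 (r, t)
      = ({r : ℝ | t < 1 - ψ r}).indicator
          (fun r => ENNReal.ofReal ((-θ) * r ^ (θ - 1))) r := by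
    intro r
    by_cases h : t < 1 - ψ r
    · have h1 : ((r, t) : ℝ × ℝ) ∈ S ψ := h
      have h2 : r ∈ {r : ℝ | t < 1 - ψ r} := h
      rw [Set.indicator_of_mem h1, Set.indicator_of_mem h2, Pi.one_apply, mul_one]
    · have h1 : ((r, t) : ℝ × ℝ) ∉ S ψ := h
      have h2 : r ∉ {r : ℝ | t < 1 - ψ r} := h
      rw [Set.indicator_of_notMem h1, Set.indicator_of_notMem h2, mul_zero]
  simp_rw [heq]
  rw [lintegral_indicator hEt, Measure.restrict_restrict hEt]

lemma meas_N (ψ : ℝ → ℝ) (hmeas : Measurable ψ) (θ : ℝ) :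
    Measurable fun t : ℝ =>
      ∫⁻ r in {r | t < 1 - ψ r} ∩ Ioi 0, ENNReal.ofReal ((-θ) * r ^ (θ - 1)) := by
  have h : (fun t : ℝ =>
        ∫⁻ r in {r | t < 1 - ψ r} ∩ Ioi 0, ENNReal.ofReal ((-θ) * r ^ (θ - 1)))
      = fun t => ∫⁻ r in Ioi 0,
          ENNReal.ofReal ((-θ) * r ^ (θ - 1)) * (S ψ).indicator 1 (r, t) :=
    funext fun t => (inner_eq ψ hmeas θ t).symm
  rw [h]
  exact Measurable.lintegral_prod_left' (measurable_unc hmeas θ)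

lemma layer (ψ : ℝ → ℝ) (hmeas : Measurable ψ) (hnonneg : ∀ r, 0 ≤ ψ r)
    (hle : ∀ r, ψ r ≤ 1) {θ : ℝ} (hθ : θ < 0) :
    ∫⁻ r in Ioi 0, ENNReal.ofReal ((-θ) * r ^ (θ - 1) * (1 - ψ r))
      = ∫⁻ t in Ioo (0:ℝ) 1,
          ∫⁻ r in {r | t < 1 - ψ r} ∩ Ioi 0, ENNReal.ofReal ((-θ) * r ^ (θ - 1)) := by
  have step2 : ∀ r ∈ Ioi (0:ℝ), ENNReal.ofReal ((-θ) * r ^ (θ - 1) * (1 - ψ r))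
      = ∫⁻ t in Ioo (0:ℝ) 1,
          ENNReal.ofReal ((-θ) * r ^ (θ - 1)) * (S ψ).indicator 1 (r, t) := by
    intro r hr
    have hw0 : 0 ≤ (-θ) * r ^ (θ - 1) :=
      mul_nonneg (by linarith) (Real.rpow_nonneg (le_of_lt hr) _)
    rw [ENNReal.ofReal_mul hw0, lintegral_const_mul' _ _ ENNReal.ofReal_ne_top]
    congr 1
    have hind : ∀ t : ℝ, (S ψ).indicator (1 : ℝ × ℝ → ℝ≥0∞) (r, t)
        = (Iio (1 - ψ r)).indicator (1 : ℝ → ℝ≥0∞) t := by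
      intro t
      by_cases h : t < 1 - ψ r
      · have h1 : ((r, t) : ℝ × ℝ) ∈ S ψ := h
        have h2 : t ∈ Iio (1 - ψ r) := h
        rw [Set.indicator_of_mem h1, Set.indicator_of_mem h2]; rfl
      · have h1 : ((r, t) : ℝ × ℝ) ∉ S ψ := h
        have h2 : t ∉ Iio (1 - ψ r) := h
        rw [Set.indicator_of_notMem h1, Set.indicator_of_notMem h2]
    simp_rw [hind]
    rw [lintegral_indicator measurableSet_Iio, Measure.restrict_restrict measurableSet_Iio]
    simp only [Pi.one_apply]
    rw [setLIntegral_one]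
    have hseteq : Iio (1 - ψ r) ∩ Ioo 0 1 = Ioo 0 (1 - ψ r) := by
      ext t
      simp only [mem_inter_iff, mem_Iio, mem_Ioo]
      constructor
      · rintro ⟨h1, h2, _⟩; exact ⟨h2, h1⟩
      · rintro ⟨h1, h2⟩; exact ⟨h2, h1, by linarith [hnonneg r]⟩
    rw [hseteq, Real.volume_Ioo, sub_zero]
  rw [setLIntegral_congr_fun measurableSet_Ioi step2,
    lintegral_lintegral_swap (measurable_unc hmeas θ).aemeasurable]
  exact setLIntegral_congr_fun measurableSet_Ioo (fun t _ => inner_eq ψ hmeas θ t)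

lemma jensen {β : ℝ} (hβ0 : 0 < β) (hβ1 : β < 1) {N : ℝ → ℝ≥0∞} (hN : Measurable N) :
    ∫⁻ t in Ioo (0:ℝ) 1, N t ^ β ≤ (∫⁻ t in Ioo (0:ℝ) 1, N t) ^ β := by
  have hβ1' : 0 < 1 - β := by linarith
  have hconj : (1/β).HolderConjugate (1/(1-β)) := by
    rw [Real.holderConjugate_iff]
    constructor
    · exact (one_lt_div hβ0).2 hβ1
    · rw [one_div, one_div, inv_inv, inv_inv]; ring
  have h := ENNReal.lintegral_mul_le_Lp_mul_Lq (volume.restrict (Ioo (0:ℝ) 1)) hconj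
      (f := fun t => N t ^ β) (g := fun _ => 1)
      ((hN.pow_const β).aemeasurable) aemeasurable_const
  have e1 : ∀ t : ℝ, (N t ^ β) ^ (1/β) = N t := by
    intro t
    rw [← ENNReal.rpow_mul, mul_one_div_cancel hβ0.ne', ENNReal.rpow_one]
  simp only [Pi.mul_apply, mul_one, ENNReal.one_rpow, e1] at h
  have h2 : (∫⁻ _ in Ioo (0:ℝ) 1, (1:ℝ≥0∞)) ^ (1/(1/(1-β))) = 1 := by
    rw [lintegral_one, Measure.restrict_apply_univ, Real.volume_Ioo]
    norm_num
  rw [h2, mul_one, one_div_one_div] at h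
  exact h

end IpMonoAux

open IpMonoAux

/-- for `ψ` with maximum `1` at `0`, decaying at infinity and Hölder near `0`,
the map `p ↦ I_p(ψ) = (p ∫_0^∞ r^{p-1}(ψ(r)-1) dr)^{1/p}` is increasing on `(-1,0)`. -/
theorem Ip_mono_neg (ψ : ℝ → ℝ) (hmeas : Measurable ψ) (hnonneg : ∀ r, 0 ≤ ψ r)
    (hle : ∀ r, ψ r ≤ 1) (hψ0 : ψ 0 = 1)
    (hdecay : Filter.Tendsto ψ Filter.atTop (nhds 0))
    (α C : ℝ) (hα : 0 < α) (hC : 0 < C)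
    (hHolder : ∀ r ∈ Icc (0:ℝ) 1, |ψ r - 1| ≤ C * r ^ α)
    (p q : ℝ) (hp : -1 < p) (hpq : p < q) (hq : q < 0) (hαp : -p < α)
    (hIp : IntegrableOn (fun r => r ^ (p - 1) * (ψ r - 1)) (Ioi 0))
    (hIq : IntegrableOn (fun r => r ^ (q - 1) * (ψ r - 1)) (Ioi 0)) :
    (p * ∫ r in Ioi (0:ℝ), r ^ (p - 1) * (ψ r - 1)) ^ (1 / p)
      ≤ (q * ∫ r in Ioi (0:ℝ), r ^ (q - 1) * (ψ r - 1)) ^ (1 / q) := by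
  have hp0 : p < 0 := lt_trans hpq hq
  have hEt : ∀ t : ℝ, MeasurableSet {r : ℝ | t < 1 - ψ r} := fun t =>
    measurableSet_lt measurable_const (measurable_const.sub hmeas)
  set Gp := ∫⁻ r in Ioi (0:ℝ), ENNReal.ofReal ((-p) * r ^ (p - 1) * (1 - ψ r)) with hGp
  set Gq := ∫⁻ r in Ioi (0:ℝ), ENNReal.ofReal ((-q) * r ^ (q - 1) * (1 - ψ r)) with hGq
  have repr : ∀ θ : ℝ, θ < 0 →
      IntegrableOn (fun r => r ^ (θ - 1) * (ψ r - 1)) (Ioi 0) →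
      (θ * ∫ r in Ioi (0:ℝ), r ^ (θ - 1) * (ψ r - 1))
        = (∫⁻ r in Ioi (0:ℝ), ENNReal.ofReal ((-θ) * r ^ (θ - 1) * (1 - ψ r))).toReal
      ∧ (∫⁻ r in Ioi (0:ℝ), ENNReal.ofReal ((-θ) * r ^ (θ - 1) * (1 - ψ r))) ≠ ⊤ := by
    intro θ hθ hI
    have hre : (θ * ∫ r in Ioi (0:ℝ), r ^ (θ - 1) * (ψ r - 1))
        = ∫ r in Ioi (0:ℝ), (-θ) * r ^ (θ - 1) * (1 - ψ r) := by
      rw [← integral_const_mul]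
      exact integral_congr_ae (ae_of_all _ fun r => by ring)
    have hint : IntegrableOn (fun r => (-θ) * r ^ (θ - 1) * (1 - ψ r)) (Ioi 0) :=
      (hI.const_mul θ).congr (ae_of_all _ fun r => by ring)
    have hnn : 0 ≤ᵐ[volume.restrict (Ioi 0)] fun r => (-θ) * r ^ (θ - 1) * (1 - ψ r) :=
      (ae_restrict_iff' measurableSet_Ioi).2 (ae_of_all _ fun r hr =>
        mul_nonneg (mul_nonneg (by linarith) (Real.rpow_nonneg (le_of_lt hr) _))
          (by linarith [hle r]))
    have hof := ofReal_integral_eq_lintegral_ofReal hint hnn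
    refine ⟨?_, ?_⟩
    · rw [hre, ← hof, ENNReal.toReal_ofReal (integral_nonneg_of_ae hnn)]
    · rw [← hof]; exact ENNReal.ofReal_ne_top
  obtain ⟨hrp, hfp⟩ := repr p hp0 hIp
  obtain ⟨hrq, hfq⟩ := repr q hq hIq
  set β := q / p with hβ
  have hβ0 : 0 < β := by
    have h := div_pos (neg_pos.2 hq) (neg_pos.2 hp0)
    rwa [neg_div_neg_eq] at h
  have hβ1 : β < 1 := by
    have h1 : (q - p) / p < 0 := div_neg_of_pos_of_neg (by linarith) hp0
    rw [sub_div, div_self hp0.ne] at h1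
    have : β - 1 < 0 := by rw [hβ]; linarith
    linarith
  -- main estimate: Gq ≤ Gp ^ β
  have hmain : Gq ≤ Gp ^ β := by
    rw [hGq, hGp, IpMonoAux.layer ψ hmeas hnonneg hle hq,
      IpMonoAux.layer ψ hmeas hnonneg hle hp0]
    calc ∫⁻ t in Ioo (0:ℝ) 1,
          ∫⁻ r in {r | t < 1 - ψ r} ∩ Ioi 0, ENNReal.ofReal ((-q) * r ^ (q - 1))
        ≤ ∫⁻ t in Ioo (0:ℝ) 1,
            (∫⁻ r in {r | t < 1 - ψ r} ∩ Ioi 0,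
              ENNReal.ofReal ((-p) * r ^ (p - 1))) ^ β := by
          refine lintegral_mono fun t => ?_
          exact IpMonoAux.key hp0 hpq hq ((hEt t).inter measurableSet_Ioi) inter_subset_right
      _ ≤ (∫⁻ t in Ioo (0:ℝ) 1,
            ∫⁻ r in {r | t < 1 - ψ r} ∩ Ioi 0,
              ENNReal.ofReal ((-p) * r ^ (p - 1))) ^ β :=
          IpMonoAux.jensen hβ0 hβ1 (IpMonoAux.meas_N ψ hmeas p)
  -- positivity of Gq
  have hpos : Gq ≠ 0 := by
    obtain ⟨R, hR⟩ := Filter.eventually_atTop.1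
      (hdecay.eventually_lt_const (show (0:ℝ) < 1/2 by norm_num))
    set R' := max R 1 with hR'
    have hR'0 : (0:ℝ) < R' := lt_of_lt_of_le one_pos (le_max_right _ _)
    set c : ℝ := (-q) * (R' + 1) ^ (q - 1) * (1/2) with hc
    have hcpos : 0 < c :=
      mul_pos (mul_pos (by linarith) (Real.rpow_pos_of_pos (by linarith) _)) (by norm_num)
    have hlow : ∀ r ∈ Ioc R' (R' + 1),
        ENNReal.ofReal c ≤ ENNReal.ofReal ((-q) * r ^ (q - 1) * (1 - ψ r)) := by
      intro r hr
      have hr0 : (0:ℝ) < r := lt_trans hR'0 hr.1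
      refine ENNReal.ofReal_le_ofReal ?_
      have h1 : (R' + 1 : ℝ) ^ (q - 1) ≤ r ^ (q - 1) :=
        Real.rpow_le_rpow_of_nonpos hr0 hr.2 (by linarith)
      have h2 : (1:ℝ)/2 ≤ 1 - ψ r := by
        have := hR r (le_trans (le_max_left _ _) hr.1.le); linarith
      have h3 : (0:ℝ) ≤ -q := by linarith
      calc c ≤ (-q) * r ^ (q - 1) * (1/2) := by
            exact mul_le_mul_of_nonneg_right (mul_le_mul_of_nonneg_left h1 h3) (by norm_num)
        _ ≤ (-q) * r ^ (q - 1) * (1 - ψ r) :=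
            mul_le_mul_of_nonneg_left h2 (mul_nonneg h3 (Real.rpow_nonneg hr0.le _))
    have hsub : Ioc R' (R' + 1) ⊆ Ioi (0:ℝ) := fun r hr => lt_trans hR'0 hr.1
    have hlb : ENNReal.ofReal c * volume (Ioc R' (R' + 1)) ≤ Gq := by
      rw [hGq]
      calc ENNReal.ofReal c * volume (Ioc R' (R' + 1))
          = ∫⁻ _ in Ioc R' (R' + 1), ENNReal.ofReal c := (setLIntegral_const _ _).symm
        _ ≤ ∫⁻ r in Ioc R' (R' + 1), ENNReal.ofReal ((-q) * r ^ (q - 1) * (1 - ψ r)) :=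
            setLIntegral_mono' measurableSet_Ioc hlow
        _ ≤ ∫⁻ r in Ioi (0:ℝ), ENNReal.ofReal ((-q) * r ^ (q - 1) * (1 - ψ r)) :=
            lintegral_mono_set hsub
    intro h0
    rw [h0] at hlb
    have hvol : volume (Ioc R' (R' + 1)) = 1 := by
      rw [Real.volume_Ioc]; norm_num
    rw [hvol, mul_one] at hlb
    exact absurd (le_antisymm hlb zero_le) (ENNReal.ofReal_pos.2 hcpos).ne'
  -- wrap up
  rw [hrp, hrq]
  have hBpos : 0 < Gq.toReal := ENNReal.toReal_pos hpos hfq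
  have hBA : Gq.toReal ≤ Gp.toReal ^ β := by
    have h1 : Gq.toReal ≤ (Gp ^ β).toReal :=
      ENNReal.toReal_mono (ENNReal.rpow_ne_top_of_nonneg hβ0.le hfp) hmain
    rwa [← ENNReal.toReal_rpow] at h1
  have h2 : (Gp.toReal ^ β) ^ (1/q) ≤ Gq.toReal ^ (1/q) :=
    Real.rpow_le_rpow_of_nonpos hBpos hBA (le_of_lt (div_neg_of_pos_of_neg one_pos hq))
  calc Gp.toReal ^ (1/p) = (Gp.toReal ^ β) ^ (1/q) := by
        rw [← Real.rpow_mul ENNReal.toReal_nonneg]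
        congr 1
        rw [hβ]
        field_simp
        rw [mul_comm, ← div_div, div_self hq.ne]
    _ ≤ Gq.toReal ^ (1/q) := h2
end

section
/- Let g : ℝⁿ → ℝ≥0 be an upper semicontinuous, integrable, log-concave function with max g = g(0) and 0 ∈ int supp(g). Then for every p ∈ (-1,0) and every x ∈ ℝⁿ, the integral ∫_0^∞ r^{p-1}(g(rx) - g(0)) dr is finite. -/
open MeasureTheory Set

set_option maxHeartbeats 1000000 in
/-- for `g ∈ LC_n^0` and `p ∈ (-1,0)`, the integral
`∫_0^∞ r^{p-1}(g(rx) - g(0)) dr` is finite for every `x`. -/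
theorem ball_body_neg_integrable {n : ℕ}
    (g : EuclideanSpace ℝ (Fin n) → ℝ) (hnonneg : ∀ x, 0 ≤ g x)
    (husc : UpperSemicontinuous g) (hint : Integrable g) (hpos : 0 < ∫ x, g x)
    (hlc : ∀ x y : EuclideanSpace ℝ (Fin n), ∀ l : ℝ, 0 < l → l < 1 →
      0 < g x * g y → g x ^ (1 - l) * g y ^ l ≤ g ((1 - l) • x + l • y))
    (hmax : ∀ x, g x ≤ g 0)
    (h0int : (0 : EuclideanSpace ℝ (Fin n)) ∈ interior (closure {x | g x ≠ 0})) :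
    ∀ p : ℝ, -1 < p → p < 0 → ∀ x : EuclideanSpace ℝ (Fin n),
      IntegrableOn (fun r : ℝ => r ^ (p - 1) * (g (r • x) - g 0)) (Ioi 0) := by
  -- `g 0 > 0`
  have hg0 : 0 < g 0 := by
    rcases (hnonneg 0).lt_or_eq with h | h
    · exact h
    · exfalso
      have : ∀ y, g y = 0 := fun y => le_antisymm (h ▸ hmax y) (hnonneg y)
      rw [show g = fun _ => (0 : ℝ) from funext this, integral_zero] at hpos
      exact lt_irrefl _ hpos
  set S : Set (EuclideanSpace ℝ (Fin n)) := {x | g x ≠ 0} with hS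
  have hgS : ∀ {y}, y ∈ S → 0 < g y := fun {y} hy => (hnonneg y).lt_of_ne (Ne.symm hy)
  -- `S` is convex
  have hconv : Convex ℝ S := by
    intro u hu v hv a b ha hb hab
    rcases ha.lt_or_eq with ha' | ha'
    · rcases hb.lt_or_eq with hb' | hb'
      · have hb1 : b < 1 := by linarith
        have key := hlc u v b hb' hb1 (mul_pos (hgS hu) (hgS hv))
        have ha1 : (1:ℝ) - b = a := by linarith
        rw [ha1] at key
        exact ne_of_gt ((mul_pos (Real.rpow_pos_of_pos (hgS hu) _)
          (Real.rpow_pos_of_pos (hgS hv) _)).trans_le key)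
      · have ha2 : a = 1 := by linarith
        simpa [ha2, ← hb'] using hu
    · have hb2 : b = 1 := by linarith
      simpa [hb2, ← ha'] using hv
  have h0S : (0 : EuclideanSpace ℝ (Fin n)) ∈ S := ne_of_gt hg0
  -- interior of `S` is nonempty
  have hSint : (interior S).Nonempty := by
    rw [hconv.interior_nonempty_iff_affineSpan_eq_top]
    have h1 : closure S ⊆ (affineSpan ℝ S : Set (EuclideanSpace ℝ (Fin n))) :=
      closure_minimal (subset_affineSpan ℝ S) (affineSpan ℝ S).closed_of_finiteDimensional
    have h2 : affineSpan ℝ (closure S) = ⊤ := by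
      rw [← (hconv.closure).interior_nonempty_iff_affineSpan_eq_top]
      exact ⟨0, h0int⟩
    have h3 : affineSpan ℝ (closure S) ≤ affineSpan ℝ S := affineSpan_le.2 h1
    rw [h2] at h3
    exact top_unique h3
  -- `0 ∈ interior S`
  obtain ⟨y, hy⟩ := hSint
  have h0intS : (0 : EuclideanSpace ℝ (Fin n)) ∈ interior S := by
    -- find small t > 0 with `-t • y ∈ interior (closure S)`
    have hcont : Continuous (fun t : ℝ => -t • y) := by continuity
    have : ∀ᶠ t in nhds (0 : ℝ), -t • y ∈ interior (closure S) := by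
      have := hcont.continuousAt (x := 0)
      have h0' : (fun t : ℝ => -t • y) 0 ∈ interior (closure S) := by simpa using h0int
      exact this.eventually_mem (isOpen_interior.mem_nhds h0')
    obtain ⟨t, ht, htmem⟩ : ∃ t : ℝ, 0 < t ∧ -t • y ∈ interior (closure S) := by
      rcases Metric.eventually_nhds_iff.1 this with ⟨ε, εpos, hε⟩
      refine ⟨ε/2, by positivity, hε ?_⟩
      rw [Real.dist_eq, sub_zero, abs_of_pos (by positivity : (0:ℝ) < ε/2)]
      linarith
    have hz : -t • y ∈ closure S := interior_subset htmem
    have key := hconv.combo_interior_closure_mem_interior hy hz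
      (a := t / (1 + t)) (b := 1 / (1 + t))
      (by positivity) (by positivity) (by field_simp; ring)
    have : (t / (1 + t)) • y + (1 / (1 + t)) • (-t • y) = 0 := by
      rw [smul_smul]
      rw [← add_smul]
      have : t / (1 + t) + 1 / (1 + t) * -t = 0 := by field_simp; ring
      rw [this, zero_smul]
    rwa [this] at key
  -- ε ball inside S
  rcases Metric.isOpen_iff.1 isOpen_interior 0 h0intS with ⟨ε, εpos, hball⟩
  intro p hp1 hp0 x
  -- choose δ with g (δ • x) > 0
  obtain ⟨δ, δpos, hδS⟩ : ∃ δ : ℝ, 0 < δ ∧ 0 < g (δ • x) := by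
    by_cases hx : x = 0
    · exact ⟨1, one_pos, by simpa [hx] using hg0⟩
    · have hxn : (0:ℝ) < ‖x‖ := norm_pos_iff.2 hx
      refine ⟨ε / (2 * ‖x‖), by positivity, hgS (interior_subset (hball ?_))⟩
      rw [Metric.mem_ball, dist_zero_right, norm_smul, Real.norm_eq_abs,
        abs_of_pos (by positivity : (0:ℝ) < ε / (2 * ‖x‖))]
      have h2 : ε / (2 * ‖x‖) * ‖x‖ = ε / 2 := by field_simp
      rw [h2]; linarith
  set a : ℝ := g (δ • x) with ha
  set c : ℝ := Real.log (g 0 / a) with hc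
  have hcnn : 0 ≤ c := Real.log_nonneg ((one_le_div hδS).2 (hmax _))
  -- key pointwise lower bound on the segment
  have hkey : ∀ r : ℝ, 0 < r → r ≤ δ → g 0 * Real.exp (-(c * (r/δ))) ≤ g (r • x) := by
    intro r hr hrδ
    have ht0 : 0 < r / δ := by positivity
    have ht1 : r / δ ≤ 1 := (div_le_one δpos).2 hrδ
    have heq : a ^ (r/δ) * g 0 ^ (1 - r/δ) = g 0 * Real.exp (-(c * (r/δ))) := by
      rw [Real.rpow_def_of_pos hδS, Real.rpow_def_of_pos hg0, ← Real.exp_add]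
      conv_rhs => rw [← Real.exp_log hg0]
      rw [← Real.exp_add]
      congr 1
      have hcc : c = Real.log (g 0) - Real.log a := Real.log_div hg0.ne' hδS.ne'
      rw [hcc]; ring
    rcases ht1.lt_or_eq with ht1' | ht1'
    · have key := hlc (δ • x) 0 (1 - r/δ) (by linarith) (by linarith)
        (mul_pos hδS hg0)
      have h1 : (1 : ℝ) - (1 - r/δ) = r/δ := by ring
      rw [h1, smul_zero, add_zero, smul_smul] at key
      have h2 : r / δ * δ = r := by field_simp
      rw [h2] at key
      exact heq ▸ key
    · have hr' : r = δ := by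
        field_simp at ht1'
        exact ht1'
      have : g 0 * Real.exp (-(c * (r/δ))) = a := by
        rw [← heq, ht1']
        simp
      rw [this, hr', ← ha]
  -- linear upper bound for the difference
  have hlin : ∀ r : ℝ, 0 < r → r ≤ δ → g 0 - g (r • x) ≤ (g 0 * c / δ) * r := by
    intro r hr hrδ
    have h1 := hkey r hr hrδ
    have h2 : 1 - Real.exp (-(c * (r/δ))) ≤ c * (r/δ) := by
      have := Real.add_one_le_exp (-(c * (r/δ)))
      linarith
    have h3 : g 0 * (1 - Real.exp (-(c * (r/δ)))) ≤ g 0 * (c * (r/δ)) :=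
      mul_le_mul_of_nonneg_left h2 hg0.le
    have h4 : g 0 * (c * (r/δ)) = (g 0 * c / δ) * r := by field_simp
    nlinarith [h1, h3]
  -- measurability
  have hgm : Measurable g := husc.measurable
  have hmeas : ∀ s : Set ℝ, MeasurableSet s →
      AEStronglyMeasurable (fun r : ℝ => r ^ (p-1) * (g (r • x) - g 0))
        (volume.restrict s) := by
    intro s hs
    have hM : Measurable fun r : ℝ => r ^ (p-1) * (g (r • x) - g 0) := by
      apply Measurable.mul
      · exact measurable_id'.pow_const _
      · exact (hgm.comp (continuous_id.smul continuous_const).measurable).sub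
          measurable_const
    exact hM.aestronglyMeasurable
  rw [← Ioc_union_Ioi_eq_Ioi δpos.le]
  apply IntegrableOn.union
  · -- near zero
    have hbound : IntegrableOn (fun r : ℝ => (g 0 * c / δ) * r ^ p) (Ioc 0 δ) := by
      have h := intervalIntegral.intervalIntegrable_rpow' (r := p)
        (by linarith : (-1:ℝ) < p) (a := 0) (b := δ)
      rw [intervalIntegrable_iff_integrableOn_Ioc_of_le δpos.le] at h
      exact h.const_mul _
    refine Integrable.mono' hbound (hmeas _ measurableSet_Ioc) ?_
    filter_upwards [self_mem_ae_restrict measurableSet_Ioc] with r hr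
    have hr0 : 0 < r := hr.1
    have hrp : 0 ≤ r ^ (p-1) := Real.rpow_nonneg hr0.le _
    have hub := hlin r hr.1 hr.2
    rw [Real.norm_eq_abs, abs_mul, abs_of_nonneg hrp,
      abs_of_nonpos (by linarith [hmax (r • x)] : g (r • x) - g 0 ≤ 0), neg_sub]
    have hmul : r ^ (p-1) * r = r ^ p := by
      conv_rhs => rw [show p = (p-1)+1 by ring]
      rw [Real.rpow_add_one hr0.ne']
    calc r ^ (p-1) * (g 0 - g (r • x)) ≤ r ^ (p-1) * ((g 0 * c / δ) * r) :=
          mul_le_mul_of_nonneg_left hub hrp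
      _ = (g 0 * c / δ) * (r ^ (p-1) * r) := by ring
      _ = (g 0 * c / δ) * r ^ p := by rw [hmul]
  · -- tail
    have hbound : IntegrableOn (fun r : ℝ => g 0 * r ^ (p-1)) (Ioi δ) :=
      (integrableOn_Ioi_rpow_of_lt (by linarith) δpos).const_mul _
    refine Integrable.mono' hbound (hmeas _ measurableSet_Ioi) ?_
    filter_upwards [self_mem_ae_restrict measurableSet_Ioi] with r hr
    have hr0 : 0 < r := δpos.trans hr
    have hrp : 0 ≤ r ^ (p-1) := Real.rpow_nonneg hr0.le _
    rw [Real.norm_eq_abs, abs_mul, abs_of_nonneg hrp,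
      abs_of_nonpos (by linarith [hmax (r • x)] : g (r • x) - g 0 ≤ 0), neg_sub]
    calc r ^ (p-1) * (g 0 - g (r • x)) ≤ r ^ (p-1) * g 0 := by
          nlinarith [hnonneg (r • x), hrp]
      _ = g 0 * r ^ (p-1) := by ring
end

section
/- Every integrable log-concave function g : ℝⁿ → ℝ≥0 with 0 < ∫ g < ∞ admits constants a, c > 0 such that g(x) ≤ a·e^{-c|x|} for all x ∈ ℝⁿ. -/
open MeasureTheory
open Metric Set

/-- an integrable log-concave function has an exponential upper bound. -/
theorem logConcave_exp_bound {n : ℕ}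
    (g : EuclideanSpace ℝ (Fin n) → ℝ) (hnonneg : ∀ x, 0 ≤ g x)
    (hlc : ∀ x y : EuclideanSpace ℝ (Fin n), ∀ l : ℝ, 0 < l → l < 1 →
      0 < g x * g y → g x ^ (1 - l) * g y ^ l ≤ g ((1 - l) • x + l • y))
    (hint : Integrable g) (hpos : 0 < ∫ x, g x) :
    ∃ a c : ℝ, 0 < a ∧ 0 < c ∧ ∀ x, g x ≤ a * Real.exp (-c * ‖x‖) := by
  -- Step 1: superlevel sets are convex
  have hconv : ∀ b : ℝ, 0 < b → Convex ℝ {x : EuclideanSpace ℝ (Fin n) | b ≤ g x} := by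
    intro b hb x hx y hy p q hp hq hpq
    rcases eq_or_lt_of_le hp with hp0 | hp0
    · have : q = 1 := by linarith
      simpa [← hp0, this] using hy
    rcases eq_or_lt_of_le hq with hq0 | hq0
    · have : p = 1 := by linarith
      simpa [← hq0, this] using hx
    have hq1 : q < 1 := by linarith
    have hprod : 0 < g x * g y := mul_pos (lt_of_lt_of_le hb hx) (lt_of_lt_of_le hb hy)
    have h1 := hlc x y q hq0 hq1 hprod
    have hp' : p = 1 - q := by linarith
    rw [← hp'] at h1
    refine le_trans ?_ h1
    have e1 : b ^ p * b ^ q = b := by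
      rw [← Real.rpow_add hb, hpq, Real.rpow_one]
    calc b = b ^ p * b ^ q := e1.symm
      _ ≤ g x ^ p * g y ^ q :=
        mul_le_mul (Real.rpow_le_rpow hb.le hx hp) (Real.rpow_le_rpow hb.le hy hq)
          (Real.rpow_nonneg hb.le q) (Real.rpow_nonneg (hnonneg x) p)
  -- Step 2: some superlevel set has positive measure
  obtain ⟨β, hβ, hKpos⟩ : ∃ b : ℝ, 0 < b ∧ 0 < volume {x : EuclideanSpace ℝ (Fin n) | b ≤ g x} := by
    by_contra h
    push_neg at h
    have h' : ∀ b : ℝ, 0 < b → volume {x : EuclideanSpace ℝ (Fin n) | b ≤ g x} = 0 := by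
      intro b hb
      exact le_antisymm (h b hb) zero_le
    have h0 : volume {x : EuclideanSpace ℝ (Fin n) | 0 < g x} = 0 := by
      have hsub : {x : EuclideanSpace ℝ (Fin n) | 0 < g x} ⊆
          ⋃ k : ℕ, {x : EuclideanSpace ℝ (Fin n) | (1:ℝ)/(k+1) ≤ g x} := by
        intro x hx
        obtain ⟨k, hk⟩ := exists_nat_gt (1 / g x)
        refine mem_iUnion.2 ⟨k, ?_⟩
        have hgx : (0:ℝ) < g x := hx
        have : 1 / g x < (k:ℝ) + 1 := by linarith
        have := (div_lt_iff₀ hgx).1 this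
        rw [mem_setOf_eq, div_le_iff₀ (by positivity)]
        linarith
      refine measure_mono_null hsub (measure_iUnion_null fun k => h' _ (by positivity))
    have hae : g =ᵐ[volume] 0 := by
      rw [Filter.eventuallyEq_iff_exists_mem]
      refine ⟨{x | 0 < g x}ᶜ, ?_, ?_⟩
      · rw [MeasureTheory.mem_ae_iff]
        simpa using h0
      · intro x hx
        simp only [mem_compl_iff, mem_setOf_eq, not_lt] at hx
        exact le_antisymm hx (hnonneg x)
    rw [integral_congr_ae hae] at hpos
    simp at hpos
  -- Step 3: ball inside the superlevel set
  obtain ⟨x0, ρ, hρ, hball⟩ : ∃ (x0 : EuclideanSpace ℝ (Fin n)) (ρ : ℝ), 0 < ρ ∧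
      ball x0 ρ ⊆ {x : EuclideanSpace ℝ (Fin n) | β ≤ g x} := by
    have hne : (interior {x : EuclideanSpace ℝ (Fin n) | β ≤ g x}).Nonempty := by
      by_contra h
      rw [not_nonempty_iff_eq_empty] at h
      have hspan : affineSpan ℝ {x : EuclideanSpace ℝ (Fin n) | β ≤ g x} ≠ ⊤ := by
        intro hs
        rw [← (hconv β hβ).interior_nonempty_iff_affineSpan_eq_top] at hs
        rw [h] at hs
        exact hs.ne_empty rfl
      have h0 : volume {x : EuclideanSpace ℝ (Fin n) | β ≤ g x} = 0 :=
        measure_mono_null (subset_affineSpan ℝ _)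
          (Measure.addHaar_affineSubspace _ _ hspan)
      rw [h0] at hKpos
      exact lt_irrefl 0 hKpos
    obtain ⟨x0, hx0⟩ := hne
    obtain ⟨ρ, hρ, hsub⟩ := Metric.isOpen_iff.1 isOpen_interior x0 hx0
    exact ⟨x0, ρ, hρ, hsub.trans interior_subset⟩
  -- volume of small balls
  set v : ℝ := (volume (ball (0 : EuclideanSpace ℝ (Fin n)) (ρ/2))).toReal with hv
  have hvpos : 0 < v := by
    rw [hv]
    exact ENNReal.toReal_pos (measure_ball_pos volume _ (by positivity)).ne'
      measure_ball_lt_top.ne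
  -- key geometric lemma: value on intermediate balls
  have hmid : ∀ (x : EuclideanSpace ℝ (Fin n)), 0 < g x → ∀ l : ℝ, 0 < l → l ≤ 1/2 →
      ∀ z ∈ ball ((1-l) • x0 + l • x) (ρ/2), β ^ (1-l) * g x ^ l ≤ g z := by
    intro x hgx l hl0 hl2 z hz
    have hl1 : l < 1 := by linarith
    have h1l : (0:ℝ) < 1 - l := by linarith
    set y : EuclideanSpace ℝ (Fin n) := (1-l)⁻¹ • (z - l • x) with hy
    have hzy : (1-l) • y + l • x = z := by
      rw [hy, smul_inv_smul₀ h1l.ne']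
      abel
    have hkey : (1-l) • (y - x0) = z - ((1-l) • x0 + l • x) := by
      rw [hy, smul_sub, smul_inv_smul₀ h1l.ne']
      abel
    have hnorm : (1-l) * ‖y - x0‖ = ‖z - ((1-l) • x0 + l • x)‖ := by
      rw [← hkey, norm_smul, Real.norm_eq_abs, abs_of_pos h1l]
    have hzc : ‖z - ((1-l) • x0 + l • x)‖ < ρ/2 := by
      rw [← dist_eq_norm]
      exact hz
    have hymem : y ∈ ball x0 ρ := by
      rw [mem_ball, dist_eq_norm]
      nlinarith [norm_nonneg (y - x0)]
    have hgy : β ≤ g y := hball hymem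
    have hprod : 0 < g y * g x := mul_pos (lt_of_lt_of_le hβ hgy) hgx
    have h1 := hlc y x l hl0 hl1 hprod
    rw [hzy] at h1
    refine le_trans ?_ h1
    exact mul_le_mul_of_nonneg_right (Real.rpow_le_rpow hβ.le hgy h1l.le)
      (Real.rpow_nonneg (hnonneg x) l)
  -- integral lower bound over small balls
  have hib : ∀ (c' : EuclideanSpace ℝ (Fin n)) (b : ℝ), 0 ≤ b →
      (∀ z ∈ ball c' (ρ/2), b ≤ g z) → b * v ≤ ∫ z in ball c' (ρ/2), g z := by
    intro c' b hb hbg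
    have h1 : b * (volume (ball c' (ρ/2))).toReal ≤ ∫ z in ball c' (ρ/2), g z :=
      by
        have := setIntegral_ge_of_const_le_real measurableSet_ball measure_ball_lt_top.ne hbg
          hint.integrableOn
        exact this
    rwa [Measure.addHaar_ball_center volume c'] at h1
  -- global bound
  set I : ℝ := ∫ x, g x with hI
  set M : ℝ := (I / (v * Real.sqrt β))^2 with hM
  have hM0 : 0 ≤ M := sq_nonneg _
  have hbound : ∀ x, g x ≤ M := by
    intro x
    rcases (hnonneg x).eq_or_lt with h0 | h0
    · rw [← h0]; exact hM0
    have h1 := hmid x h0 (1/2) (by norm_num) (le_refl _)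
    have h2 := hib _ _ (by positivity) h1
    have h3 : ∫ z in ball ((1-(1/2:ℝ)) • x0 + (1/2:ℝ) • x) (ρ/2), g z ≤ I :=
      setIntegral_le_integral hint (Filter.Eventually.of_forall hnonneg)
    have h4 : β ^ (1-(1/2:ℝ)) * g x ^ (1/2:ℝ) * v ≤ I := le_trans h2 h3
    have e1 : β ^ (1-(1/2:ℝ)) = Real.sqrt β := by
      rw [Real.sqrt_eq_rpow]; norm_num
    have e2 : g x ^ (1/2:ℝ) = Real.sqrt (g x) := by
      rw [Real.sqrt_eq_rpow]
    rw [e1, e2] at h4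
    have hsb : 0 < Real.sqrt β := Real.sqrt_pos.2 hβ
    have h5 : Real.sqrt (g x) ≤ I / (v * Real.sqrt β) := by
      rw [le_div_iff₀ (by positivity)]
      nlinarith
    have h6 : g x = Real.sqrt (g x) ^ 2 := (Real.sq_sqrt (hnonneg x)).symm
    rw [h6, hM]
    exact pow_le_pow_left₀ (Real.sqrt_nonneg _) h5 2
  -- tail integrals are small
  have htail : ∀ ε : ℝ, 0 < ε → ∃ k : ℕ,
      ∫ z in (closedBall x0 (k:ℝ))ᶜ, g z < ε := by
    intro ε hε
    have hmono : Monotone (fun k : ℕ => closedBall x0 (k:ℝ)) := fun a b hab =>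
      closedBall_subset_closedBall (by exact_mod_cast hab)
    have hunion : ⋃ k : ℕ, closedBall x0 (k:ℝ) = Set.univ := by
      ext z
      simp only [mem_iUnion, mem_closedBall, mem_univ, iff_true]
      exact exists_nat_ge (dist z x0)
    have htend := tendsto_setIntegral_of_monotone (fun k : ℕ => measurableSet_closedBall)
      hmono (by rw [hunion]; exact hint.integrableOn)
    rw [hunion, setIntegral_univ] at htend
    have hev : ∀ᶠ y in nhds I, I - ε < y := eventually_gt_nhds (by linarith)
    obtain ⟨k, hk⟩ := (htend.eventually hev).exists
    refine ⟨k, ?_⟩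
    have hsplit : (∫ z in closedBall x0 (k:ℝ), g z) + ∫ z in (closedBall x0 (k:ℝ))ᶜ, g z = I :=
      integral_add_compl measurableSet_closedBall hint
    linarith
  -- key decay lemma: beyond radius 2(k+ρ), g is below b
  have hkey : ∀ b : ℝ, 0 < b → b ≤ β → ∀ k : ℕ,
      (∫ z in (closedBall x0 (k:ℝ))ᶜ, g z) < b * v →
      ∀ x : EuclideanSpace ℝ (Fin n), 2*((k:ℝ)+ρ) ≤ dist x x0 → g x < b := by
    intro b hb hbβ k hk x hx
    by_contra hcon
    push_neg at hcon
    set d : ℝ := dist x x0 with hd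
    set R : ℝ := (k:ℝ) + ρ with hR
    have hRpos : 0 < R := by positivity
    have hdpos : 0 < d := by
      rw [hd]; linarith
    set l : ℝ := R / d with hl
    have hl0 : 0 < l := div_pos hRpos hdpos
    have hl2 : l ≤ 1/2 := by
      rw [hl, div_le_iff₀ hdpos]; linarith
    set c' : EuclideanSpace ℝ (Fin n) := (1-l) • x0 + l • x with hc'
    have hgx : 0 < g x := lt_of_lt_of_le hb hcon
    have h1 : ∀ z ∈ ball c' (ρ/2), b ≤ g z := by
      intro z hz
      refine le_trans ?_ (hmid x hgx l hl0 hl2 z hz)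
      have e1 : b ^ (1-l) * b ^ l = b := by
        rw [← Real.rpow_add hb]; norm_num
      calc b = b ^ (1-l) * b ^ l := e1.symm
        _ ≤ β ^ (1-l) * g x ^ l :=
          mul_le_mul (Real.rpow_le_rpow hb.le hbβ (by linarith))
            (Real.rpow_le_rpow hb.le hcon hl0.le) (Real.rpow_nonneg hb.le l)
            (Real.rpow_nonneg hβ.le _)
    have h2 := hib c' b hb.le h1
    have hcd : dist c' x0 = R := by
      have e : c' - x0 = l • (x - x0) := by
        rw [hc']; module
      rw [dist_eq_norm, e, norm_smul, Real.norm_eq_abs, abs_of_pos hl0, ← dist_eq_norm, ← hd,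
        hl, div_mul_cancel₀ _ hdpos.ne']
    have h3 : ball c' (ρ/2) ⊆ (closedBall x0 (k:ℝ))ᶜ := by
      intro z hz
      simp only [mem_compl_iff, mem_closedBall, not_le]
      have ht := dist_triangle x0 z c'
      have e1 : dist x0 c' = R := by rw [dist_comm]; exact hcd
      have e2 : dist x0 z = dist z x0 := dist_comm _ _
      rw [mem_ball] at hz
      linarith
    have h4 : ∫ z in ball c' (ρ/2), g z ≤ ∫ z in (closedBall x0 (k:ℝ))ᶜ, g z :=
      setIntegral_mono_set hint.integrableOn (Filter.Eventually.of_forall hnonneg)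
        (HasSubset.Subset.eventuallyLE h3)
    linarith
  -- choose tail radius for level β/2
  obtain ⟨k2, hk2⟩ := htail ((β/2) * v) (by positivity)
  have hsmall := hkey (β/2) (by positivity) (by linarith) k2 hk2
  set R' : ℝ := (k2:ℝ) + ρ with hR'
  have hR'pos : 0 < R' := by positivity
  set cc : ℝ := Real.log 2 / (2*R') with hcc
  have hccpos : 0 < cc := div_pos (Real.log_pos one_lt_two) (by positivity)
  have hdecay : ∀ x : EuclideanSpace ℝ (Fin n), 2*R' < dist x x0 →
      g x ≤ β * Real.exp (-cc * dist x x0) := by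
    intro x hx
    rcases (hnonneg x).eq_or_lt with h0 | h0
    · rw [← h0]; positivity
    set d : ℝ := dist x x0 with hd
    have hdpos : 0 < d := lt_trans (by positivity) hx
    set t : ℝ := 2*R'/d with ht
    have ht0 : 0 < t := by positivity
    have ht1 : t < 1 := by
      rw [ht, div_lt_one hdpos]; exact hx
    have hgx0 : β ≤ g x0 := hball (mem_ball_self hρ)
    have hC := hlc x0 x t ht0 ht1 (mul_pos (lt_of_lt_of_le hβ hgx0) h0)
    have hCdist : dist ((1-t) • x0 + t • x) x0 = 2*R' := by
      have e : (1-t) • x0 + t • x - x0 = t • (x - x0) := by module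
      rw [dist_eq_norm, e, norm_smul, Real.norm_eq_abs, abs_of_pos ht0, ← dist_eq_norm,
        ← hd, ht, div_mul_cancel₀ _ hdpos.ne']
    have hCsmall : g ((1-t) • x0 + t • x) < β/2 := by
      refine hsmall _ ?_
      rw [hCdist, hR']
    have h5 : g x0 ^ (1-t) * g x ^ t < β/2 := lt_of_le_of_lt hC hCsmall
    have h6 : β ^ (1-t) * g x ^ t < β/2 := by
      refine lt_of_le_of_lt ?_ h5
      exact mul_le_mul_of_nonneg_right (Real.rpow_le_rpow hβ.le hgx0 (by linarith))
        (Real.rpow_nonneg (hnonneg x) t)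
    have hsplit : β ^ (t:ℝ) * β ^ (1-t) = β := by
      rw [← Real.rpow_add hβ]; norm_num
    have hb1t : 0 < β ^ (1-t) := Real.rpow_pos_of_pos hβ _
    have h7 : g x ^ t < β ^ t / 2 := by
      have h6' : g x ^ t * β ^ (1-t) < (β ^ t / 2) * β ^ (1-t) := by
        calc g x ^ t * β ^ (1-t) = β ^ (1-t) * g x ^ t := mul_comm _ _
          _ < β/2 := h6
          _ = (β ^ t / 2) * β ^ (1-t) := by rw [div_mul_eq_mul_div, hsplit]
      exact lt_of_mul_lt_mul_right h6' hb1t.le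
    have h8 := Real.rpow_lt_rpow (Real.rpow_nonneg (hnonneg x) t) h7
      (by positivity : (0:ℝ) < 1/t)
    have eL : (g x ^ t) ^ ((1:ℝ)/t) = g x := by
      rw [← Real.rpow_mul (hnonneg x), mul_one_div, div_self ht0.ne', Real.rpow_one]
    have eR : (β ^ t / 2) ^ ((1:ℝ)/t) = β * Real.exp (-(Real.log 2) * (1/t)) := by
      rw [div_eq_mul_inv, Real.mul_rpow (Real.rpow_nonneg hβ.le t) (by norm_num),
        ← Real.rpow_mul hβ.le, mul_one_div, div_self ht0.ne', Real.rpow_one,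
        Real.inv_rpow (by norm_num : (0:ℝ) ≤ 2), Real.rpow_def_of_pos (by norm_num : (0:ℝ) < 2),
        ← Real.exp_neg]
      ring_nf
    rw [eL, eR] at h8
    have eexp : -(Real.log 2) * (1/t) = -cc * d := by
      rw [ht, hcc]
      field_simp
    rw [eexp] at h8
    exact h8.le
  -- final assembly
  refine ⟨(M + β) * Real.exp (cc * (2*R' + ‖x0‖)), cc,
    mul_pos (by linarith) (Real.exp_pos _), hccpos, ?_⟩
  intro x
  have hnx : ‖x‖ ≤ dist x x0 + ‖x0‖ := by
    have h := dist_triangle x x0 0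
    rwa [dist_zero_right, dist_zero_right] at h
  by_cases hx : 2*R' < dist x x0
  · refine le_trans (hdecay x hx) ?_
    rw [mul_assoc, ← Real.exp_add]
    refine mul_le_mul (by linarith) (Real.exp_le_exp.2 ?_) (Real.exp_pos _).le (by linarith)
    nlinarith [mul_nonneg hccpos.le (sub_nonneg.2 hnx), mul_pos hccpos hR'pos]
  · push_neg at hx
    have h1 := hbound x
    have hnx2 : ‖x‖ ≤ 2*R' + ‖x0‖ := by linarith
    rw [mul_assoc, ← Real.exp_add]
    have he : (0:ℝ) ≤ cc * (2*R' + ‖x0‖) + (-cc * ‖x‖) := by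
      nlinarith [mul_nonneg hccpos.le (sub_nonneg.2 hnx2)]
    have h2 := Real.one_le_exp he
    have h3 := mul_le_mul_of_nonneg_left h2 (by linarith : (0:ℝ) ≤ M + β)
    linarith
end

section
/- Let K ⊂ ℝⁿ be a convex body and p > 0. Then for every x ∈ ℝⁿ, ∫_K ‖x‖_{K-y}^{-p} dy = p ∫_0^∞ g_K(rx) r^{p-1} dr, where g_K(x) = Vol_n(K ∩ (K+x)) and ‖x‖_{K-y} = inf{t > 0 : x ∈ t(K-y)}. -/
open MeasureTheory Set Pointwise

/-- for a convex body `K` and `p > 0`,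
`∫_K ‖x‖_{K-y}^{-p} dy = p ∫_0^∞ g_K(rx) r^{p-1} dr`. -/
theorem radial_mean_rep_pos {n : ℕ} (K : Set (EuclideanSpace ℝ (Fin n)))
    (hK : IsCompact K) (hKconv : Convex ℝ K) (hKint : (interior K).Nonempty)
    (gK : EuclideanSpace ℝ (Fin n) → ℝ)
    (hgK : ∀ x, gK x = (volume (K ∩ (x +ᵥ K))).toReal)
    (p : ℝ) (hp : 0 < p) (x : EuclideanSpace ℝ (Fin n)) :
    ∫ y in K, (gauge ((-y) +ᵥ K) x) ^ (-p)
      = p * ∫ r in Ioi (0:ℝ), gK (r • x) * r ^ (p - 1) := by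
  classical
  have hKm : MeasurableSet K := hK.measurableSet
  rcases eq_or_ne x 0 with rfl | hx
  · -- degenerate case `x = 0` : both sides vanish
    have h1 : ∫ y in K, (gauge ((-y) +ᵥ K) (0 : EuclideanSpace ℝ (Fin n))) ^ (-p) = 0 := by
      have hz : ∀ y : EuclideanSpace ℝ (Fin n),
          (gauge ((-y) +ᵥ K) (0 : EuclideanSpace ℝ (Fin n))) ^ (-p) = 0 := fun y => by
        rw [gauge_zero, Real.zero_rpow (neg_ne_zero.mpr hp.ne')]
      simp only [hz, integral_zero]
    rw [h1]
    have hc : gK 0 = (volume K).toReal := by rw [hgK]; simp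
    have hcpos : 0 < (volume K).toReal :=
      ENNReal.toReal_pos (Measure.measure_pos_of_nonempty_interior _ hKint).ne' hK.measure_lt_top.ne
    have hnint : ¬ IntegrableOn
        (fun r : ℝ => gK (r • (0 : EuclideanSpace ℝ (Fin n))) * r ^ (p - 1)) (Ioi 0) := by
      intro h
      have h3 : IntegrableOn (fun r : ℝ => (volume K).toReal * r ^ (p - 1)) (Ioi 0) := by
        simpa [smul_zero, hc] using h
      have h4 : IntegrableOn (fun r : ℝ => r ^ (p - 1)) (Ioi 0) := by
        have := h3.const_mul ((volume K).toReal)⁻¹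
        simp [← mul_assoc, inv_mul_cancel₀ hcpos.ne'] at this
        exact this
      have h5 : IntegrableOn (fun r : ℝ => r ^ (p - 1)) (Ioi 1) :=
        h4.mono_set (Ioi_subset_Ioi zero_le_one)
      rw [integrableOn_Ioi_rpow_iff zero_lt_one] at h5
      linarith
    rw [integral_undef hnint, mul_zero]
  -- main case : `x ≠ 0`
  obtain ⟨R, hR⟩ := isBounded_iff_forall_norm_le.mp hK.isBounded
  set S : EuclideanSpace ℝ (Fin n) → Set ℝ :=
    fun y => {s : ℝ | 0 ≤ s ∧ y + s • x ∈ K} with hS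
  set G : EuclideanSpace ℝ (Fin n) → ℝ :=
    fun y => if y ∈ K then sSup (S y) else 0 with hGdef
  have hxpos : (0:ℝ) < ‖x‖ := norm_pos_iff.mpr hx
  have hbdd : ∀ y, BddAbove (S y) := by
    intro y
    refine ⟨(R + ‖y‖) / ‖x‖, fun s hs => ?_⟩
    obtain ⟨hs0, hsK⟩ := hs
    rw [le_div_iff₀ hxpos]
    have h1 : ‖s • x‖ ≤ R + ‖y‖ := by
      have : s • x = (y + s • x) - y := by abel
      rw [this]
      exact (norm_sub_le _ _).trans (add_le_add (hR _ hsK) le_rfl)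
    calc s * ‖x‖ = ‖s • x‖ := by rw [norm_smul, Real.norm_eq_abs, abs_of_nonneg hs0]
    _ ≤ R + ‖y‖ := h1
  have hne : ∀ y ∈ K, (S y).Nonempty := fun y hy => ⟨0, le_refl 0, by simpa using hy⟩
  have hSclosed : ∀ y, IsClosed (S y) := by
    intro y
    have : S y = Ici (0:ℝ) ∩ (fun s : ℝ => y + s • x) ⁻¹' K := rfl
    rw [this]
    exact isClosed_Ici.inter (hK.isClosed.preimage (by continuity))
  have hGnn : ∀ y, 0 ≤ G y := by
    intro y
    by_cases hy : y ∈ K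
    · rw [hGdef]; simp only [if_pos hy]
      exact le_csSup (hbdd y) ⟨le_refl 0, by simpa using hy⟩
    · rw [hGdef]; simp [if_neg hy]
  have hGmem : ∀ y ∈ K, G y ∈ S y := by
    intro y hy
    rw [hGdef]; simp only [if_pos hy]
    exact (hSclosed y).csSup_mem (hne y hy) (hbdd y)
  have hIcc : ∀ y ∈ K, ∀ s : ℝ, 0 ≤ s → s ≤ G y → y + s • x ∈ K := by
    intro y hy s hs0 hsG
    have hGy : G y ∈ S y := hGmem y hy
    rcases eq_or_lt_of_le (hs0.trans hsG) with hG0 | hGpos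
    · have : s = 0 := le_antisymm (hsG.trans hG0.symm.le) hs0
      simpa [this] using hy
    · have hyG : y + (G y) • x ∈ K := hGy.2
      have ht0 : 0 ≤ s / G y := div_nonneg hs0 hGpos.le
      have ht1 : s / G y ≤ 1 := (div_le_one hGpos).mpr hsG
      have hcomb := hKconv hy hyG (by linarith : (0:ℝ) ≤ 1 - s / G y) ht0 (by ring)
      have hEq : (1 - s / G y) • y + (s / G y) • (y + (G y) • x) = y + ((s / G y) * G y) • x := by
        module
      rw [hEq, div_mul_cancel₀ s hGpos.ne'] at hcomb
      exact hcomb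
  have hG_le_iff : ∀ r : ℝ, 0 < r → ∀ y, (r ≤ G y ↔ y ∈ K ∧ y + r • x ∈ K) := by
    intro r hr y
    constructor
    · intro hle
      have hy : y ∈ K := by
        by_contra hy
        rw [hGdef] at hle; simp only [if_neg hy] at hle; linarith
      exact ⟨hy, hIcc y hy r hr.le hle⟩
    · rintro ⟨hy, hmem⟩
      rw [hGdef]; simp only [if_pos hy]
      exact le_csSup (hbdd y) ⟨hr.le, hmem⟩
  have hGmeas : Measurable G := by
    apply measurable_of_Ici
    intro r
    rcases le_or_gt r 0 with hr | hr
    · have : G ⁻¹' Ici r = univ := eq_univ_of_forall fun y => hr.trans (hGnn y)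
      rw [this]; exact MeasurableSet.univ
    · have : G ⁻¹' Ici r = K ∩ (fun y => y + r • x) ⁻¹' K := by
        ext y
        simpa using hG_le_iff r hr y
      rw [this]
      exact hKm.inter (((continuous_id.add continuous_const).measurable) hKm)
  -- the gauge is the reciprocal of G on K
  have hgauge : ∀ y ∈ K, gauge ((-y) +ᵥ K) x = (G y)⁻¹ := by
    intro y hy
    have hmem_iff : ∀ t : ℝ, 0 < t → (x ∈ t • ((-y) +ᵥ K) ↔ y + t⁻¹ • x ∈ K) := by
      intro t ht
      rw [mem_smul_set_iff_inv_smul_mem₀ ht.ne', mem_vadd_set_iff_neg_vadd_mem]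
      simp [neg_neg, vadd_eq_add]
    rw [gauge_def]
    have hGy : G y = sSup (S y) := by rw [hGdef]; simp [if_pos hy]
    rcases eq_or_lt_of_le (hGnn y) with hG0 | hGpos
    · have hempty : {r ∈ Ioi (0:ℝ) | x ∈ r • ((-y) +ᵥ K)} = ∅ := by
        ext t
        simp only [sep_setOf, mem_setOf_eq, mem_Ioi, mem_empty_iff_false, iff_false, not_and]
        intro ht hmem
        rw [hmem_iff t ht] at hmem
        have h1 : t⁻¹ ≤ G y := by
          rw [hGy]; exact le_csSup (hbdd y) ⟨(inv_pos.mpr ht).le, hmem⟩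
        have h2 : (0:ℝ) < t⁻¹ := inv_pos.mpr ht
        rw [← hG0] at h1
        linarith
      rw [hempty, Real.sInf_empty, ← hG0, inv_zero]
    · have hset : {r ∈ Ioi (0:ℝ) | x ∈ r • ((-y) +ᵥ K)} = Ici (G y)⁻¹ := by
        ext t
        simp only [sep_setOf, mem_setOf_eq, mem_Ioi, mem_Ici]
        constructor
        · rintro ⟨ht, hmem⟩
          rw [hmem_iff t ht] at hmem
          have h1 : t⁻¹ ≤ G y := by
            rw [hGy]; exact le_csSup (hbdd y) ⟨(inv_pos.mpr ht).le, hmem⟩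
          calc (G y)⁻¹ ≤ (t⁻¹)⁻¹ := by
                apply inv_anti₀ (inv_pos.mpr ht) h1
          _ = t := inv_inv t
        · intro hts
          have ht : 0 < t := lt_of_lt_of_le (inv_pos.mpr hGpos) hts
          refine ⟨ht, ?_⟩
          rw [hmem_iff t ht]
          have h1 : t⁻¹ ≤ G y := by
            calc t⁻¹ ≤ ((G y)⁻¹)⁻¹ := inv_anti₀ (inv_pos.mpr hGpos) hts
            _ = G y := inv_inv _
          exact hIcc y hy t⁻¹ (inv_pos.mpr ht).le h1
      rw [hset, csInf_Ici]
  -- measurability of the covariogram-type function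
  have hCmeas : MeasurableSet {q : ℝ × EuclideanSpace ℝ (Fin n) | q.2 ∈ K ∧ q.2 - q.1 • x ∈ K} := by
    have h1 : MeasurableSet {q : ℝ × EuclideanSpace ℝ (Fin n) | q.2 ∈ K} :=
      measurable_snd hKm
    have h2 : MeasurableSet {q : ℝ × EuclideanSpace ℝ (Fin n) | q.2 - q.1 • x ∈ K} :=
      ((continuous_snd.sub (continuous_fst.smul continuous_const)).measurable) hKm
    exact h1.inter h2
  have hprodset : ∀ r : ℝ, K ∩ (r • x +ᵥ K)
      = Prod.mk r ⁻¹' {q : ℝ × EuclideanSpace ℝ (Fin n) | q.2 ∈ K ∧ q.2 - q.1 • x ∈ K} := by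
    intro r
    ext y
    simp only [mem_inter_iff, mem_preimage, mem_setOf_eq, mem_vadd_set_iff_neg_vadd_mem,
      vadd_eq_add, neg_add_eq_sub]
  have hcov_meas : Measurable fun r : ℝ => volume (K ∩ (r • x +ᵥ K)) := by
    have h := measurable_measure_prodMk_left (ν := volume) hCmeas
    simpa only [← hprodset] using h
  -- the level sets of G are a.e. null
  have hBmeas : MeasurableSet {q : ℝ × EuclideanSpace ℝ (Fin n) | G q.2 = q.1} := by
    have h : Measurable fun q : ℝ × EuclideanSpace ℝ (Fin n) => G q.2 - q.1 :=
      (hGmeas.comp measurable_snd).sub measurable_fst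
    have : {q : ℝ × EuclideanSpace ℝ (Fin n) | G q.2 = q.1}
        = (fun q : ℝ × EuclideanSpace ℝ (Fin n) => G q.2 - q.1) ⁻¹' {0} := by
      ext q; simp [sub_eq_zero]
    rw [this]
    exact h (measurableSet_singleton 0)
  have hnull : ∀ᵐ r ∂(volume : Measure ℝ), volume {y : EuclideanSpace ℝ (Fin n) | G y = r} = 0 := by
    have hmeas' : Measurable fun r : ℝ => volume {y : EuclideanSpace ℝ (Fin n) | G y = r} :=
      measurable_measure_prodMk_left hBmeas
    have hzero : ∫⁻ r : ℝ, volume {y : EuclideanSpace ℝ (Fin n) | G y = r} = 0 := by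
      have h1 : ∫⁻ r : ℝ, volume {y : EuclideanSpace ℝ (Fin n) | G y = r}
          = ((volume : Measure ℝ).prod (volume : Measure (EuclideanSpace ℝ (Fin n))))
              {q : ℝ × EuclideanSpace ℝ (Fin n) | G q.2 = q.1} :=
        (Measure.prod_apply hBmeas).symm
      rw [h1, Measure.prod_apply_symm hBmeas]
      have h2 : ∀ y : EuclideanSpace ℝ (Fin n),
          (volume : Measure ℝ) ((fun r : ℝ => (r, y)) ⁻¹'
            {q : ℝ × EuclideanSpace ℝ (Fin n) | G q.2 = q.1}) = 0 := by
        intro y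
        have : ((fun r : ℝ => (r, y)) ⁻¹' {q : ℝ × EuclideanSpace ℝ (Fin n) | G q.2 = q.1})
            = {G y} := by ext r; simp [eq_comm]
        rw [this, Real.volume_singleton]
      simp only [h2, lintegral_zero]
    have h0 : (fun r : ℝ => volume {y : EuclideanSpace ℝ (Fin n) | G y = r}) =ᵐ[volume] 0 := by
      rw [← lintegral_eq_zero_iff hmeas']
      exact hzero
    filter_upwards [h0] with r hr0
    simpa using hr0
  -- the a.e. identity between the two inner integrands
  have hae : ∀ᵐ r ∂(volume.restrict (Ioi (0:ℝ))),
      (volume.restrict K) {a | r < G a} * ENNReal.ofReal (r ^ (p - 1))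
        = ENNReal.ofReal (gK (r • x) * r ^ (p - 1)) := by
    filter_upwards [self_mem_ae_restrict measurableSet_Ioi, ae_restrict_of_ae hnull]
      with r hr hrnull
    have hrpos : (0:ℝ) < r := hr
    have hsub : {a | r < G a} ⊆ K := by
      intro a ha
      by_contra haK
      have : G a = 0 := by rw [hGdef]; simp [if_neg haK]
      simp only [mem_setOf_eq, this] at ha
      linarith
    have hres : (volume.restrict K) {a | r < G a} = volume {a | r < G a} := by
      rw [Measure.restrict_apply (show MeasurableSet {a | r < G a} from hGmeas measurableSet_Ioi)]
      rw [inter_eq_self_of_subset_left hsub]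
    have hlevel : volume {a | r < G a} = volume {a | r ≤ G a} := by
      apply le_antisymm (measure_mono fun a (ha : r < G a) => ha.le)
      have hsub2 : {a | r ≤ G a} ⊆ {a | r < G a} ∪ {a : EuclideanSpace ℝ (Fin n) | G a = r} := by
        intro a ha
        simp only [mem_setOf_eq] at ha
        rcases lt_or_eq_of_le ha with h | h
        · exact Or.inl h
        · exact Or.inr h.symm
      calc volume {a | r ≤ G a}
          ≤ volume ({a | r < G a} ∪ {a : EuclideanSpace ℝ (Fin n) | G a = r}) :=
            measure_mono hsub2
        _ ≤ volume {a | r < G a} + volume {a : EuclideanSpace ℝ (Fin n) | G a = r} :=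
            measure_union_le _ _
        _ = volume {a | r < G a} := by rw [hrnull, add_zero]
    have hsetK : {a | r ≤ G a} = K ∩ ((-(r • x)) +ᵥ K) := by
      ext a
      rw [mem_setOf_eq, hG_le_iff r hrpos a]
      simp [mem_vadd_set_iff_neg_vadd_mem, vadd_eq_add, neg_neg, add_comm]
    have htrans : volume (K ∩ ((-(r • x)) +ᵥ K)) = volume (K ∩ (r • x +ᵥ K)) := by
      conv_lhs => rw [← measure_vadd volume (r • x) (K ∩ ((-(r • x)) +ᵥ K))]
      rw [vadd_set_inter, vadd_vadd, add_neg_cancel, zero_vadd, inter_comm]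
    have hfin : volume (K ∩ (r • x +ᵥ K)) ≠ ⊤ :=
      ((measure_mono inter_subset_left).trans_lt hK.measure_lt_top).ne
    rw [hres, hlevel, hsetK, htrans, hgK,
      ENNReal.ofReal_mul ENNReal.toReal_nonneg, ENNReal.ofReal_toReal hfin]
  -- rewrite the left-hand side
  have hLHS : ∫ y in K, (gauge ((-y) +ᵥ K) x) ^ (-p)
      = (∫⁻ y in K, ENNReal.ofReal (G y ^ p)).toReal := by
    have hcongr : ∀ y ∈ K, (gauge ((-y) +ᵥ K) x) ^ (-p) = G y ^ p := by
      intro y hy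
      rw [hgauge y hy, Real.inv_rpow (hGnn y), Real.rpow_neg (hGnn y), inv_inv]
    rw [setIntegral_congr_fun hKm hcongr]
    apply integral_eq_lintegral_of_nonneg_ae
    · exact ae_of_all _ fun y => Real.rpow_nonneg (hGnn y) p
    · exact (hGmeas.pow_const p).aestronglyMeasurable
  -- rewrite the right-hand side
  have hRHS : ∫ r in Ioi (0:ℝ), gK (r • x) * r ^ (p - 1)
      = (∫⁻ r in Ioi (0:ℝ), ENNReal.ofReal (gK (r • x) * r ^ (p - 1))).toReal := by
    apply integral_eq_lintegral_of_nonneg_ae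
    · filter_upwards [self_mem_ae_restrict measurableSet_Ioi] with r hr
      exact mul_nonneg (by rw [hgK]; exact ENNReal.toReal_nonneg)
        (Real.rpow_nonneg (le_of_lt hr) _)
    · have hm : Measurable fun r : ℝ => gK (r • x) * r ^ (p - 1) := by
        have h1 : Measurable fun r : ℝ => gK (r • x) := by
          simp only [hgK]
          exact hcov_meas.ennreal_toReal
        exact h1.mul (measurable_id.pow_const _)
      exact hm.aestronglyMeasurable
  -- layer cake formula
  have key := lintegral_rpow_eq_lintegral_meas_lt_mul (volume.restrict K)
    (ae_of_all _ hGnn) hGmeas.aemeasurable hp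
  rw [hLHS, key, lintegral_congr_ae hae, hRHS, ENNReal.toReal_mul,
    ENNReal.toReal_ofReal hp.le]
end

section
/- Let K ⊂ ℝⁿ be a convex body and p ∈ (-1, 0). Then for every x ∈ ℝⁿ, ∫_K ‖x‖_{K-y}^{-p} dy = p ∫_0^∞ (g_K(rx) - Vol_n(K)) r^{p-1} dr. -/
open MeasureTheory Set Pointwise Topology ENNReal

section Aux

variable {n : ℕ}

local notation "E" => EuclideanSpace ℝ (Fin n)

/-- translate of a compact convex set is closed -/
private lemma vadd_isClosed {K : Set E} (hK : IsCompact K) (z : E) :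
    IsClosed (z +ᵥ K) := by
  have h1 : IsClosed ((fun w => z + w) '' K) := (Homeomorph.addLeft z).isClosedMap _ hK.isClosed
  have h2 : (fun w => z + w) '' K = z +ᵥ K := by
    ext w; simp [Set.mem_vadd_set_iff_neg_vadd_mem, vadd_eq_add]
  rwa [h2] at h1

/-- gauge sublevel description on the interior -/
private lemma gauge_level {K : Set E} (hK : IsCompact K) (hKconv : Convex ℝ K)
    (x : E) {y : E} (hy : y ∈ interior K) {t : ℝ} (ht : 0 < t) :
    gauge ((-y) +ᵥ K) x ≤ t ↔ y ∈ (-(t⁻¹ • x)) +ᵥ K := by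
  set s : Set E := (-y) +ᵥ K with hs
  have hconv : Convex ℝ s := hKconv.vadd _
  have hcl : IsClosed s := vadd_isClosed hK _
  have hnhds : s ∈ 𝓝 (0 : E) := by
    have h1 : K ∈ 𝓝 y := mem_interior_iff_mem_nhds.1 hy
    have := vadd_mem_nhds_vadd (-y) h1
    simpa using this
  have h2 : gauge s (t⁻¹ • x) = t⁻¹ * gauge s x :=
    gauge_smul_of_nonneg (inv_nonneg.2 ht.le) x
  have h3 : gauge s x ≤ t ↔ gauge s (t⁻¹ • x) ≤ 1 := by
    rw [h2, inv_mul_eq_div, div_le_one ht]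
  rw [h3, gauge_le_one_iff_mem_closure hconv hnhds, hcl.closure_eq]
  rw [hs, Set.mem_vadd_set_iff_neg_vadd_mem, Set.mem_vadd_set_iff_neg_vadd_mem]
  simp [vadd_eq_add, add_comm]

/-- evenness of the covariogram -/
private lemma cov_even (K : Set E) (v : E) :
    volume (K ∩ ((-v) +ᵥ K)) = volume (K ∩ (v +ᵥ K)) := by
  have h : v +ᵥ (K ∩ ((-v) +ᵥ K)) = (v +ᵥ K) ∩ K := by
    ext z
    simp only [Set.mem_vadd_set_iff_neg_vadd_mem, Set.mem_inter_iff, vadd_eq_add, neg_neg]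
    constructor
    · rintro ⟨h1, h2⟩
      refine ⟨h1, ?_⟩
      simpa [add_assoc] using h2
    · rintro ⟨h1, h2⟩
      refine ⟨h1, ?_⟩
      simpa [add_assoc] using h2
  calc volume (K ∩ ((-v) +ᵥ K)) = volume (v +ᵥ (K ∩ ((-v) +ᵥ K))) := (measure_vadd volume v _).symm
  _ = volume ((v +ᵥ K) ∩ K) := by rw [h]
  _ = volume (K ∩ (v +ᵥ K)) := by rw [Set.inter_comm]

/-- measurability of the covariogram along a ray -/
private lemma cov_meas {K : Set E} (hK : IsCompact K) (x : E) :
    Measurable fun r : ℝ => volume (K ∩ ((r • x) +ᵥ K)) := by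
  have hKm : MeasurableSet K := hK.isClosed.measurableSet
  have hW : MeasurableSet {rz : ℝ × E | rz.2 ∈ K ∧ rz.2 - rz.1 • x ∈ K} := by
    refine MeasurableSet.inter ?_ ?_
    · exact measurable_snd hKm
    · have hc : Continuous fun rz : ℝ × E => rz.2 - rz.1 • x :=
        continuous_snd.sub (continuous_fst.smul continuous_const)
      exact hc.measurable hKm
  have := measurable_measure_prodMk_left (ν := (volume : Measure E)) hW
  convert this using 2 with r
  congr 1
  ext z
  simp only [Set.mem_inter_iff, Set.mem_preimage, Set.mem_setOf_eq,
    Set.mem_vadd_set_iff_neg_vadd_mem, vadd_eq_add]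
  rw [neg_add_eq_sub]

/-- inner-regularity style identity: intersections with the interior have the same volume -/
private lemma vol_inter_interior {K : Set E} (hK : IsCompact K) (hKconv : Convex ℝ K)
    (A : Set E) : volume (A ∩ interior K) = volume (A ∩ K) := by
  have hfr : volume (frontier K) = 0 := hKconv.addHaar_frontier volume
  refine le_antisymm (measure_mono (Set.inter_subset_inter_right _ interior_subset)) ?_
  have hsub : A ∩ K ⊆ (A ∩ interior K) ∪ frontier K := by
    intro y hy
    by_cases h : y ∈ interior K
    · exact Or.inl ⟨hy.1, h⟩
    · right
      rw [hK.isClosed.frontier_eq]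
      exact ⟨hy.2, h⟩
  calc volume (A ∩ K) ≤ volume ((A ∩ interior K) ∪ frontier K) := measure_mono hsub
  _ ≤ volume (A ∩ interior K) + volume (frontier K) := measure_union_le _ _
  _ = volume (A ∩ interior K) := by rw [hfr, add_zero]

/-- the level-set measure identity -/
private lemma meas_level {K : Set E} (hK : IsCompact K) (hKconv : Convex ℝ K)
    (x : E) {t : ℝ} (ht : 0 < t) :
    volume ({a : E | t < gauge ((-a) +ᵥ K) x} ∩ K)
      = volume K - volume (K ∩ ((t⁻¹ • x) +ᵥ K)) := by
  set S : Set E := (-(t⁻¹ • x)) +ᵥ K with hSdef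
  have hSm : MeasurableSet S := (vadd_isClosed hK _).measurableSet
  have e1 : {a : E | t < gauge ((-a) +ᵥ K) x} ∩ interior K = interior K \ S := by
    ext y
    simp only [Set.mem_inter_iff, Set.mem_setOf_eq, Set.mem_diff]
    constructor
    · rintro ⟨h1, h2⟩
      exact ⟨h2, fun hS => absurd ((gauge_level hK hKconv x h2 ht).2 hS) (not_le.2 h1)⟩
    · rintro ⟨h1, h2⟩
      exact ⟨not_le.1 fun hle => h2 ((gauge_level hK hKconv x h1 ht).1 hle), h1⟩
  have e2 : volume ({a : E | t < gauge ((-a) +ᵥ K) x} ∩ K) = volume (interior K \ S) := by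
    rw [← vol_inter_interior hK hKconv, e1]
  have e4 : volume (interior K) = volume K := by
    have := vol_inter_interior hK hKconv (univ : Set E)
    simpa using this
  have e5 : volume (interior K ∩ S) = volume (K ∩ S) := by
    rw [Set.inter_comm, vol_inter_interior hK hKconv, Set.inter_comm]
  have e6 : volume (K ∩ S) = volume (K ∩ ((t⁻¹ • x) +ᵥ K)) := cov_even K _
  have key : volume (interior K ∩ S) + volume (interior K \ S) = volume (interior K) :=
    measure_inter_add_diff _ hSm
  rw [e2]
  have hfin : volume (K ∩ ((t⁻¹ • x) +ᵥ K)) ≠ ⊤ :=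
    (lt_of_le_of_lt (measure_mono Set.inter_subset_left) hK.measure_lt_top).ne
  refine ENNReal.eq_sub_of_add_eq hfin ?_
  rw [← e6, ← e5, add_comm, key, e4]

/-- measurability of the (interior-truncated) gauge function -/
private lemma gauge_indicator_meas {K : Set E} (hK : IsCompact K) (hKconv : Convex ℝ K)
    (x : E) :
    Measurable ((interior K).indicator (fun y : E => gauge ((-y) +ᵥ K) x)) := by
  set f : E → ℝ := fun y => gauge ((-y) +ᵥ K) x with hf
  apply measurable_of_Iic
  intro c
  by_cases hc : 0 ≤ c
  · have : (interior K).indicator f ⁻¹' Iic c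
        = (interior K)ᶜ ∪ (interior K ∩
            ⋂ (q : ℚ), ⋂ (_ : c < (q : ℝ)), ((-(((q : ℝ))⁻¹ • x)) +ᵥ K)) := by
      ext y
      simp only [Set.mem_preimage, Set.mem_Iic, Set.mem_union, Set.mem_compl_iff,
        Set.mem_inter_iff, Set.mem_iInter]
      by_cases hy : y ∈ interior K
      · rw [Set.indicator_of_mem hy]
        constructor
        · intro hle
          refine Or.inr ⟨hy, fun q hq => ?_⟩
          have hq0 : (0 : ℝ) < (q : ℝ) := lt_of_le_of_lt hc hq
          exact (gauge_level hK hKconv x hy hq0).1 (hle.trans hq.le)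
        · rintro (h | ⟨-, h⟩)
          · exact absurd hy h
          · by_contra hlt
            push_neg at hlt
            obtain ⟨q, hq1, hq2⟩ := exists_rat_btwn hlt
            have hq0 : (0 : ℝ) < (q : ℝ) := lt_of_le_of_lt hc hq1
            have := (gauge_level hK hKconv x hy hq0).2 (h q hq1)
            exact absurd this (not_le.2 hq2)
      · rw [Set.indicator_of_notMem hy]
        simp [hy, hc]
    rw [this]
    refine MeasurableSet.union (measurableSet_interior.compl) ?_
    refine measurableSet_interior.inter ?_
    refine MeasurableSet.iInter fun q => MeasurableSet.iInter fun _ => ?_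
    exact (vadd_isClosed hK _).measurableSet
  · push_neg at hc
    have : (interior K).indicator f ⁻¹' Iic c = ∅ := by
      ext y
      simp only [Set.mem_preimage, Set.mem_Iic, Set.mem_empty_iff_false, iff_false, not_le]
      refine lt_of_lt_of_le hc ?_
      exact Set.indicator_nonneg (fun z _ => gauge_nonneg _) y
    rw [this]
    exact MeasurableSet.empty

/-- 1-dimensional change of variables for lower integrals -/
private lemma lintegral_image_1d {s : Set ℝ} {f f' : ℝ → ℝ}
    (hs : MeasurableSet s) (hf' : ∀ x ∈ s, HasDerivWithinAt f (f' x) s x)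
    (hf : Set.InjOn f s) (g : ℝ → ℝ≥0∞) :
    ∫⁻ x in f '' s, g x = ∫⁻ x in s, ENNReal.ofReal |f' x| * g (f x) := by
  simpa only [ContinuousLinearMap.det_toSpanSingleton] using
    MeasureTheory.lintegral_image_eq_lintegral_abs_det_fderiv_mul volume hs
      (fun x hx => (hf' x hx).hasFDerivWithinAt) hf g

end Aux

/-- for a convex body `K` and `p ∈ (-1,0)`,
`∫_K ‖x‖_{K-y}^{-p} dy = p ∫_0^∞ (g_K(rx) - Vol(K)) r^{p-1} dr`. -/
theorem radial_mean_rep_neg {n : ℕ} (K : Set (EuclideanSpace ℝ (Fin n)))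
    (hK : IsCompact K) (hKconv : Convex ℝ K) (hKint : (interior K).Nonempty)
    (gK : EuclideanSpace ℝ (Fin n) → ℝ)
    (hgK : ∀ x, gK x = (volume (K ∩ (x +ᵥ K))).toReal)
    (p : ℝ) (hp : -1 < p) (hp0 : p < 0) (x : EuclideanSpace ℝ (Fin n)) :
    ∫ y in K, (gauge ((-y) +ᵥ K) x) ^ (-p)
      = p * ∫ r in Ioi (0:ℝ), (gK (r • x) - (volume K).toReal) * r ^ (p - 1) := by
  have hKm : MeasurableSet K := hK.isClosed.measurableSet
  have hVfin : volume K ≠ ⊤ := hK.measure_lt_top.ne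
  set q : ℝ := -p with hqdef
  have hq0 : 0 < q := by rw [hqdef]; linarith
  set f : EuclideanSpace ℝ (Fin n) → ℝ := fun y => gauge ((-y) +ᵥ K) x with hfdef
  set C : ℝ → ℝ≥0∞ := fun r => volume (K ∩ ((r • x) +ᵥ K)) with hCdef
  have hCmeas : Measurable C := cov_meas hK x
  have hCle : ∀ r, C r ≤ volume K := fun r => measure_mono inter_subset_left
  set D : ℝ → ℝ≥0∞ := fun r => volume K - C r with hDdef
  have hDmeas : Measurable D := measurable_const.sub hCmeas
  have hDfin : ∀ r, D r ≠ ⊤ := fun r => (lt_of_le_of_lt tsub_le_self hK.measure_lt_top).ne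
  -- a.e. measurability of f on K
  have hae_int : ∀ᵐ y ∂(volume.restrict K), y ∈ interior K := by
    rw [ae_iff]
    rw [Measure.restrict_apply' hKm]
    refine measure_mono_null ?_ (hKconv.addHaar_frontier volume)
    intro y hy
    rw [hK.isClosed.frontier_eq]
    exact ⟨hy.2, hy.1⟩
  have hfeq : f =ᵐ[volume.restrict K] (interior K).indicator f := by
    filter_upwards [hae_int] with y hy
    rw [Set.indicator_of_mem hy]
  have hfae : AEMeasurable f (volume.restrict K) :=
    ⟨(interior K).indicator f, gauge_indicator_meas hK hKconv x, hfeq⟩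
  have hfnn : 0 ≤ᵐ[volume.restrict K] f := ae_of_all _ fun y => gauge_nonneg _
  -- Step A : Bochner to lower integral
  have stepA : ∫ y in K, f y ^ q = (∫⁻ y in K, ENNReal.ofReal (f y ^ q)).toReal := by
    rw [integral_eq_lintegral_of_nonneg_ae
      (ae_of_all _ fun y => Real.rpow_nonneg (gauge_nonneg _) q)
      (((Real.continuous_rpow_const hq0.le).measurable.comp_aemeasurable hfae).aestronglyMeasurable)]
  -- Step B : layer cake
  have stepB := lintegral_rpow_eq_lintegral_meas_lt_mul (volume.restrict K) hfnn hfae hq0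
  -- Step C : identify the level-set measures
  have stepC : ∫⁻ t in Ioi (0:ℝ), (volume.restrict K) {a | t < f a} * ENNReal.ofReal (t ^ (q-1))
      = ∫⁻ t in Ioi (0:ℝ), D t⁻¹ * ENNReal.ofReal (t ^ (q-1)) := by
    refine setLIntegral_congr_fun measurableSet_Ioi (fun t ht => ?_)
    congr 1
    rw [Measure.restrict_apply' hKm, meas_level hK hKconv x ht]
  -- Step D : substitution r = t⁻¹
  have image_inv : (fun t : ℝ => t⁻¹) '' Ioi (0:ℝ) = Ioi (0:ℝ) := by
    ext z
    constructor
    · rintro ⟨w, hw, rfl⟩; exact mem_Ioi.2 (inv_pos.2 (mem_Ioi.1 hw))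
    · intro hz; exact ⟨z⁻¹, mem_Ioi.2 (inv_pos.2 (mem_Ioi.1 hz)), inv_inv z⟩
  have stepD : ∫⁻ r in Ioi (0:ℝ), D r * ENNReal.ofReal (r ^ (p-1))
      = ∫⁻ t in Ioi (0:ℝ), D t⁻¹ * ENNReal.ofReal (t ^ (q-1)) := by
    have hderiv : ∀ t ∈ Ioi (0:ℝ), HasDerivWithinAt (fun y : ℝ => y⁻¹) (-(t^2)⁻¹) (Ioi 0) t :=
      fun t ht => (hasDerivAt_inv (ne_of_gt ht)).hasDerivWithinAt
    have hinj : Set.InjOn (fun y : ℝ => y⁻¹) (Ioi 0) := fun a _ b _ h => inv_injective h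
    have him := lintegral_image_1d measurableSet_Ioi hderiv hinj
      (fun r => D r * ENNReal.ofReal (r ^ (p-1)))
    rw [image_inv] at him
    rw [him]
    refine setLIntegral_congr_fun measurableSet_Ioi (fun t ht => ?_)
    have ht0 : (0:ℝ) < t := ht
    have h1 : |(-(t^2)⁻¹)| = (t^2)⁻¹ := by
      rw [abs_neg, abs_of_pos]; positivity
    have h2 : (t⁻¹) ^ (p-1) = t ^ (1-p) := by
      rw [Real.inv_rpow ht0.le, ← Real.rpow_neg ht0.le]
      ring_nf
    have h3 : (t^2)⁻¹ * t ^ (1-p) = t ^ (q-1) := by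
      rw [← Real.rpow_natCast t 2, ← Real.rpow_neg ht0.le, ← Real.rpow_add ht0, hqdef]
      norm_num
      ring_nf
    rw [h1, h2, mul_comm (ENNReal.ofReal ((t^2)⁻¹)) _, mul_assoc,
      ← ENNReal.ofReal_mul (by positivity), mul_comm ((t:ℝ) ^ (1-p)) _, h3]
  -- define J
  set J : ℝ≥0∞ := ∫⁻ r in Ioi (0:ℝ), D r * ENNReal.ofReal (r^(p-1)) with hJdef
  have hLHS : ∫ y in K, f y ^ q = q * J.toReal := by
    rw [stepA, stepB, stepC, ← stepD, ENNReal.toReal_mul, ENNReal.toReal_ofReal hq0.le]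
  -- RHS
  have hRHSint : ∀ r : ℝ, (gK (r • x) - (volume K).toReal) * r ^ (p-1)
      = -((D r).toReal * r ^ (p-1)) := by
    intro r
    rw [hgK]
    have hDr : (D r).toReal = (volume K).toReal - (C r).toReal :=
      ENNReal.toReal_sub_of_le (hCle r) hVfin
    rw [hDr]
    ring
  have hDnn : 0 ≤ᵐ[volume.restrict (Ioi (0:ℝ))] fun r => (D r).toReal * r ^ (p-1) := by
    filter_upwards [ae_restrict_mem measurableSet_Ioi] with r hr
    exact mul_nonneg ENNReal.toReal_nonneg (Real.rpow_nonneg (le_of_lt hr) _)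
  have hDsm : AEStronglyMeasurable (fun r => (D r).toReal * r ^ (p-1))
      (volume.restrict (Ioi (0:ℝ))) :=
    (hDmeas.ennreal_toReal.aestronglyMeasurable).mul
      ((ContinuousOn.rpow_const continuousOn_id fun x hx => Or.inl (ne_of_gt hx)).aestronglyMeasurable
        measurableSet_Ioi)
  have hRHS : ∫ r in Ioi (0:ℝ), (gK (r • x) - (volume K).toReal) * r ^ (p-1) = -(J.toReal) := by
    rw [integral_congr_ae (ae_of_all _ hRHSint), integral_neg]
    congr 1
    rw [integral_eq_lintegral_of_nonneg_ae hDnn hDsm]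
    congr 1
    refine setLIntegral_congr_fun measurableSet_Ioi (fun r hr => ?_)
    rw [ENNReal.ofReal_mul ENNReal.toReal_nonneg, ENNReal.ofReal_toReal (hDfin r)]
  show ∫ y in K, f y ^ q = p * ∫ r in Ioi (0:ℝ), (gK (r • x) - (volume K).toReal) * r ^ (p - 1)
  rw [hLHS, hRHS, hqdef]
  ring
end
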